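/- arXiv:2009.05035 — 3 statements merged into one kernel-verified Lean document; each statement's English description precedes it below -/
import Mathlib

section
/- Let V be a finite-dimensional real normed vector space and C ⊆ V a properly convex open cone. Let g ∈ GL(V) with g(C) = C, and suppose g is biproximal with attracting line L⁺ = ℝ·v⁺, repelling line L⁻ = ℝ·v⁻ and invariant complement W, where v⁺ and v⁻ are nonzero vectors lying in the closure of C. Then the following are equivalent: (i) the axis of g meets C, i.e. there exist s, t > 0 with s·v⁺ + t·v⁻ ∈ C; (ii) the boundary point [v⁺] is smooth, i.e. any two nonzero linear functionals φ, ψ : V → ℝ that are nonnegative on C and vanish at v⁺ are proportional. Moreover, when these hold, every nonzero linear functional φ : V → ℝ that is nonnegative on C and vanishes at v⁺ vanishes on all of L⁺ ⊕ W (so the unique supporting hyperplane at [v⁺] is the projectivization of ℝ·v⁺ ⊕ W). (Lemma 3.1, stated in the cone model of projective convex geometry.) -/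
set_option maxHeartbeats 1000000

open Filter

theorem aux_squeeze (a r : ℕ → ℝ) (Cst : ℝ) (ha : ∀ n, 0 ≤ a n)
    (har : ∀ n, a n ≤ r n * (Cst + a n)) (hr : Tendsto r atTop (nhds 0)) :
    Tendsto a atTop (nhds 0) := by
  have hev : ∀ᶠ n in atTop, r n < 1/2 := hr.eventually (gt_mem_nhds (by norm_num))
  have hbd : ∀ᶠ n in atTop, a n ≤ (2*Cst) * r n := by
    filter_upwards [hev] with n hn
    have h2 : r n * a n ≤ (1/2) * a n := mul_le_mul_of_nonneg_right hn.le (ha n)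
    nlinarith [ha n, har n]
  have hlim : Tendsto (fun n => (2*Cst) * r n) atTop (nhds 0) := by
    simpa using hr.const_mul (2*Cst)
  exact squeeze_zero' (Eventually.of_forall ha) hbd hlim


/-- `g ∈ GL(V)` is biproximal with attracting line `Lp`, repelling line `Lm` and
invariant complement `W`. -/
structure IsBiproximal {V : Type*} [NormedAddCommGroup V] [NormedSpace ℝ V]
    (g : V ≃ₗ[ℝ] V) (Lp Lm W : Submodule ℝ V) : Prop where
  finrank_Lp : Module.finrank ℝ Lp = 1
  finrank_Lm : Module.finrank ℝ Lm = 1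
  ne : Lp ≠ Lm
  inf_lines : Lp ⊓ Lm = ⊥
  inf_W : (Lp ⊔ Lm) ⊓ W = ⊥
  sup_top : Lp ⊔ Lm ⊔ W = ⊤
  map_Lp : Lp.map (g : V →ₗ[ℝ] V) = Lp
  map_Lm : Lm.map (g : V →ₗ[ℝ] V) = Lm
  map_W : W.map (g : V →ₗ[ℝ] V) = W
  attract : ∀ w : V, w ∉ Lm ⊔ W →
    Tendsto (fun n : ℕ => Metric.infDist (‖(g ^ n) w‖⁻¹ • (g ^ n) w) (Lp : Set V))
      atTop (nhds 0)
  repel : ∀ w : V, w ∉ Lp ⊔ W →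
    Tendsto (fun n : ℕ => Metric.infDist (‖(g⁻¹ ^ n) w‖⁻¹ • (g⁻¹ ^ n) w) (Lm : Set V))
      atTop (nhds 0)

/-- `C` is a properly convex open cone in `V`. -/
def IsProperlyConvexOpenCone {V : Type*} [NormedAddCommGroup V] [NormedSpace ℝ V]
    (C : Set V) : Prop :=
  C.Nonempty ∧ IsOpen C ∧ Convex ℝ C ∧ (∀ c ∈ C, ∀ t : ℝ, 0 < t → t • c ∈ C) ∧
    closure C ∩ (-closure C) ⊆ {0}

/-- Lemma 3.1 (cone model): for a biproximal automorphism `g` of a properly convex open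
cone `C`, the axis of `g` meets `C` if and only if the attracting fixed point `[v⁺]` is a
smooth boundary point; moreover, in that case the unique supporting hyperplane at `[v⁺]`
is the projectivization of `ℝ·v⁺ ⊕ W`. -/
theorem lemma_3_1 {V : Type*} [NormedAddCommGroup V] [NormedSpace ℝ V]
    [FiniteDimensional ℝ V]
    (C : Set V) (hC : IsProperlyConvexOpenCone C)
    (g : V ≃ₗ[ℝ] V) (hgC : (g : V → V) '' C = C)
    (vp vm : V) (hvp : vp ≠ 0) (hvm : vm ≠ 0)
    (hvpC : vp ∈ closure C) (hvmC : vm ∈ closure C)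
    (W : Submodule ℝ V)
    (hbi : IsBiproximal g (Submodule.span ℝ {vp}) (Submodule.span ℝ {vm}) W) :
    ((∃ s > (0 : ℝ), ∃ t > (0 : ℝ), s • vp + t • vm ∈ C) ↔
      (∀ φ ψ : V →ₗ[ℝ] ℝ, φ ≠ 0 → (∀ c ∈ C, 0 ≤ φ c) → φ vp = 0 →
        ψ ≠ 0 → (∀ c ∈ C, 0 ≤ ψ c) → ψ vp = 0 → ∃ r : ℝ, ψ = r • φ)) ∧
    ((∃ s > (0 : ℝ), ∃ t > (0 : ℝ), s • vp + t • vm ∈ C) →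
      ∀ φ : V →ₗ[ℝ] ℝ, φ ≠ 0 → (∀ c ∈ C, 0 ≤ φ c) → φ vp = 0 →
        ∀ w ∈ Submodule.span ℝ {vp} ⊔ W, φ w = 0) := by
  classical
  obtain ⟨⟨c₀, hc₀⟩, hopen, hconv, hcone, hproper⟩ := hC
  have hinf_lines := hbi.inf_lines
  have hinf_W := hbi.inf_W
  have hsup_top := hbi.sup_top
  have hmap_Lp := hbi.map_Lp
  have hmap_Lm := hbi.map_Lm
  have hmap_W := hbi.map_W
  have hrepel := hbi.repel
  have hgcont : Continuous (⇑g) := (g : V →ₗ[ℝ] V).continuous_of_finiteDimensional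
  have hKcone : ∀ t : ℝ, 0 < t → ∀ x ∈ closure C, t • x ∈ closure C := by
    intro t ht x hx
    have hcont : Continuous (fun y : V => t • y) := continuous_const_smul t
    have h1 : (fun y : V => t • y) '' C ⊆ C := by
      rintro _ ⟨c, hc, rfl⟩; exact hcone c hc t ht
    have h2 := image_closure_subset_closure_image (s := C) hcont
    exact closure_mono h1 (h2 (Set.mem_image_of_mem _ hx))
  have hproper' : ∀ x : V, x ∈ closure C → -x ∈ closure C → x = 0 := by
    intro x hx hx'
    exact hproper ⟨hx, Set.mem_neg.2 hx'⟩
  have hCg : ∀ c ∈ C, g c ∈ C := by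
    intro c hc; rw [← hgC]; exact ⟨c, hc, rfl⟩
  have hmul0 : ∀ (a b : V ≃ₗ[ℝ] V) (x : V), (a * b) x = a (b x) := fun _ _ _ => rfl
  have hCg' : ∀ c ∈ C, g⁻¹ c ∈ C := by
    intro c hc
    rw [← hgC] at hc
    obtain ⟨y, hy, rfl⟩ := hc
    have : g⁻¹ (g y) = y := by
      rw [← hmul0 g⁻¹ g y, inv_mul_cancel g]; rfl
    rw [this]; exact hy
  have hCn : ∀ (n : ℕ), ∀ c ∈ C, (g ^ n) c ∈ C := by
    intro n
    induction n with
    | zero => intro c hc; simpa using hc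
    | succ n ih =>
      intro c hc
      rw [pow_succ, hmul0]
      exact ih _ (hCg c hc)
  have hCn' : ∀ (n : ℕ), ∀ c ∈ C, (g⁻¹ ^ n) c ∈ C := by
    intro n
    induction n with
    | zero => intro c hc; simpa using hc
    | succ n ih =>
      intro c hc
      rw [pow_succ, hmul0]
      exact ih _ (hCg' c hc)
  set Lp : Submodule ℝ V := Submodule.span ℝ {vp} with hLpdef
  set Lm : Submodule ℝ V := Submodule.span ℝ {vm} with hLmdef
  have hmul : ∀ (a b : V ≃ₗ[ℝ] V) (x : V), (a * b) x = a (b x) := fun _ _ _ => rfl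
  have hginvg : ∀ x : V, g⁻¹ (g x) = x := by
    intro x; rw [← hmul g⁻¹ g x, inv_mul_cancel g]; rfl
  -- eigenvalue facts
  have hvpLp : vp ∈ Lp := Submodule.mem_span_singleton_self vp
  have hvmLm : vm ∈ Lm := Submodule.mem_span_singleton_self vm
  have hgvpmem : g vp ∈ Lp := by
    rw [← hmap_Lp]; exact Submodule.mem_map_of_mem hvpLp
  obtain ⟨lam, hlam⟩ := Submodule.mem_span_singleton.1 hgvpmem
  have hgvmmem : g vm ∈ Lm := by
    rw [← hmap_Lm]; exact Submodule.mem_map_of_mem hvmLm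
  obtain ⟨mu, hmu⟩ := Submodule.mem_span_singleton.1 hgvmmem
  -- positivity of eigenvalues
  have heigpos : ∀ (v : V) (a : ℝ), v ≠ 0 → v ∈ closure C → a • v = g v → 0 < a := by
    intro v a hv hvC ha
    have hgv : g v ∈ closure C := by
      have h2 := image_closure_subset_closure_image (s := C) hgcont
      have := h2 (Set.mem_image_of_mem _ hvC)
      rwa [hgC] at this
    rcases lt_trichotomy a 0 with h | h | h
    · exfalso
      have h1 : (-a) • v ∈ closure C := hKcone (-a) (by linarith) v hvC
      have h2 : -((-a) • v) ∈ closure C := by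
        rw [neg_smul, neg_neg, ha]; exact hgv
      have := hproper' _ h1 h2
      rw [smul_eq_zero] at this
      rcases this with h' | h'
      · linarith [neg_eq_zero.1 h']
      · exact hv h'
    · exfalso
      apply hv
      have : g v = 0 := by rw [← ha, h, zero_smul]
      have := congrArg (⇑g⁻¹) this
      rwa [hginvg, map_zero] at this
    · exact h
  have hlampos : 0 < lam := heigpos vp lam hvp hvpC hlam
  have hmupos : 0 < mu := heigpos vm mu hvm hvmC hmu
  -- iterated eigenvector formulas
  have hgn_vp : ∀ n : ℕ, (g ^ n) vp = lam ^ n • vp := by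
    intro n
    induction n with
    | zero => simp
    | succ n ih =>
      rw [pow_succ, hmul, ← hlam, map_smul, ih, smul_smul, ← pow_succ']
  have hgn_vm : ∀ n : ℕ, (g ^ n) vm = mu ^ n • vm := by
    intro n
    induction n with
    | zero => simp
    | succ n ih =>
      rw [pow_succ, hmul, ← hmu, map_smul, ih, smul_smul, ← pow_succ']
  have hginv_vm : g⁻¹ vm = mu⁻¹ • vm := by
    have : g⁻¹ (mu • vm) = vm := by rw [hmu, hginvg]
    rw [map_smul] at this
    have := congrArg (fun y => mu⁻¹ • y) this
    simpa [smul_smul, inv_mul_cancel₀ (ne_of_gt hmupos)] using this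
  have hginvn_vm : ∀ n : ℕ, (g⁻¹ ^ n) vm = (mu⁻¹) ^ n • vm := by
    intro n
    induction n with
    | zero => simp
    | succ n ih =>
      rw [pow_succ, hmul, hginv_vm, map_smul, ih, smul_smul, ← pow_succ']
  -- invariance of submodules under g⁻¹
  have hsubinv : ∀ (p : Submodule ℝ V), p.map (g : V →ₗ[ℝ] V) = p → ∀ x ∈ p, g⁻¹ x ∈ p := by
    intro p hp x hx
    rw [← hp] at hx
    obtain ⟨y, hy, rfl⟩ := hx
    have : g⁻¹ ((g : V →ₗ[ℝ] V) y) = y := hginvg y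
    rw [this]; exact hy
  have hPWinv : ∀ x ∈ Lp ⊔ W, g⁻¹ x ∈ Lp ⊔ W := by
    intro x hx
    obtain ⟨p, hp, w, hw, rfl⟩ := Submodule.mem_sup.1 hx
    rw [map_add]
    exact Submodule.add_mem_sup (hsubinv Lp hmap_Lp p hp) (hsubinv W hmap_W w hw)
  have hPWinvn : ∀ (n : ℕ), ∀ x ∈ Lp ⊔ W, (g⁻¹ ^ n) x ∈ Lp ⊔ W := by
    intro n
    induction n with
    | zero => intro x hx; simpa using hx
    | succ n ih =>
      intro x hx
      rw [pow_succ, hmul]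
      exact ih _ (hPWinv x hx)
  -- disjointness
  have hdisj : ∀ x, x ∈ Lm → x ∈ Lp ⊔ W → x = 0 := by
    intro x hxm hxs
    obtain ⟨p, hp, w, hw, hpw⟩ := Submodule.mem_sup.1 hxs
    have hw' : w ∈ (Lp ⊔ Lm) ⊓ W := by
      constructor
      · have : w = x - p := by rw [← hpw]; abel
        rw [this]
        exact Submodule.sub_mem _ (Submodule.mem_sup_right hxm) (Submodule.mem_sup_left hp)
      · exact hw
    rw [hinf_W] at hw'
    have hw0 : w = 0 := hw'
    have hxp : x ∈ Lp := by rw [← hpw, hw0, add_zero]; exact hp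
    have : x ∈ Lp ⊓ Lm := ⟨hxp, hxm⟩
    rw [hinf_lines] at this
    exact this
  have hvmPW : vm ∉ Lp ⊔ W := fun h => hvm (hdisj vm hvmLm h)
  -- complement structure
  have hcompl : IsCompl Lm (Lp ⊔ W) := by
    constructor
    · rw [Submodule.disjoint_def]
      exact hdisj
    · rw [codisjoint_iff, ← hsup_top]
      rw [sup_assoc, sup_left_comm]
  -- projection machinery
  let prLm : V →ₗ[ℝ] Lm := Submodule.projectionOnto Lm (Lp ⊔ W) hcompl
  let coordm : Lm ≃ₗ[ℝ] ℝ := LinearEquiv.coord ℝ V vm hvm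
  let xip : V →ₗ[ℝ] ℝ := (coordm : Lm →ₗ[ℝ] ℝ) ∘ₗ prLm
  have hprLm_smul : ∀ (x : V), ((prLm x : V)) = xip x • vm := by
    intro x
    have := LinearEquiv.coord_apply_smul ℝ V vm hvm (prLm x)
    exact this.symm
  have hxivm : xip vm = 1 := by
    have h1 : prLm vm = ⟨vm, hvmLm⟩ := by
      have := Submodule.projectionOnto_apply_left hcompl ⟨vm, hvmLm⟩
      simpa using this
    show coordm (prLm vm) = 1
    rw [h1]
    exact LinearEquiv.coord_self ℝ V vm hvm
  have hxiPW : ∀ y ∈ Lp ⊔ W, xip y = 0 := by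
    intro y hy
    show coordm (prLm y) = 0
    rw [Submodule.projectionOnto_apply_of_mem_right hcompl hy, map_zero]
  have hxivp : xip vp = 0 := hxiPW vp (Submodule.mem_sup_left hvpLp)
  have hdec : ∀ x : V, x - xip x • vm ∈ Lp ⊔ W := by
    intro x
    rw [← Submodule.projectionOnto_apply_eq_zero_iff hcompl]
    rw [map_sub, ← hprLm_smul]
    have := Submodule.projectionOnto_apply_left hcompl (prLm x)
    rw [this, sub_self]
  -- continuous projection onto Lp ⊔ W along Lm
  let pi0 : V →ₗ[ℝ] V := LinearMap.id - (Lm.subtype ∘ₗ prLm)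
  let pic : V →L[ℝ] V := LinearMap.toContinuousLinearMap pi0
  have hpic_apply : ∀ z : V, pic z = z - ((prLm z : V)) := by
    intro z; rfl
  have hpicLm : ∀ y : V, y ∈ Lm → pic y = 0 := by
    intro y hy
    rw [hpic_apply]
    have : prLm y = ⟨y, hy⟩ := by
      have := Submodule.projectionOnto_apply_left hcompl ⟨y, hy⟩
      simpa using this
    rw [this]; simp
  have hpicPW : ∀ y : V, y ∈ Lp ⊔ W → pic y = y := by
    intro y hy
    rw [hpic_apply, Submodule.projectionOnto_apply_of_mem_right hcompl hy]
    simp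
  have hLmclosed : IsClosed ((Lm : Set V)) := Submodule.closed_of_finiteDimensional Lm
  have hpic_infDist : ∀ z : V, ‖pic z‖ ≤ ‖pic‖ * Metric.infDist z ((Lm : Set V)) := by
    intro z
    obtain ⟨y, hy, hyd⟩ := hLmclosed.exists_infDist_eq_dist ⟨0, Submodule.zero_mem Lm⟩ z
    rw [hyd, dist_eq_norm]
    calc ‖pic z‖ = ‖pic (z - y)‖ := by rw [map_sub, hpicLm y hy, sub_zero]
    _ ≤ ‖pic‖ * ‖z - y‖ := pic.le_opNorm _
  -- Lemma A : decay on Lp ⊔ W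
  have hA : ∀ y ∈ Lp ⊔ W, Tendsto (fun n : ℕ => mu ^ n * ‖(g⁻¹ ^ n) y‖) atTop (nhds 0) := by
    intro y hy
    have hwPW : vm + y ∉ Lp ⊔ W := by
      intro h
      have : vm ∈ Lp ⊔ W := by
        have := Submodule.sub_mem _ h hy
        simpa using this
      exact hvmPW this
    have hw0 : vm + y ≠ 0 := by
      intro h
      apply hwPW
      rw [h]; exact Submodule.zero_mem _
    have hq : ∀ n : ℕ, (g⁻¹ ^ n) (vm + y) = (mu⁻¹) ^ n • vm + (g⁻¹ ^ n) y := by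
      intro n; rw [map_add, hginvn_vm]
    have hqne : ∀ n : ℕ, (g⁻¹ ^ n) (vm + y) ≠ 0 := by
      intro n h
      exact hw0 ((map_eq_zero_iff _ (g⁻¹ ^ n).injective).1 h)
    have hqnorm : ∀ n : ℕ, 0 < ‖(g⁻¹ ^ n) (vm + y)‖ := fun n => norm_pos_iff.2 (hqne n)
    have hpicq : ∀ n : ℕ, pic ((g⁻¹ ^ n) (vm + y)) = (g⁻¹ ^ n) y := by
      intro n
      rw [hq n, map_add, hpicLm _ (Submodule.smul_mem _ _ hvmLm),
        hpicPW _ (hPWinvn n y hy), zero_add]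
    -- the ratio tends to zero
    have hr : Tendsto (fun n : ℕ => ‖(g⁻¹ ^ n) (vm + y)‖⁻¹ * ‖(g⁻¹ ^ n) y‖) atTop (nhds 0) := by
      have hbd : ∀ n : ℕ, ‖(g⁻¹ ^ n) (vm + y)‖⁻¹ * ‖(g⁻¹ ^ n) y‖ ≤
          ‖pic‖ * Metric.infDist (‖(g⁻¹ ^ n) (vm + y)‖⁻¹ • (g⁻¹ ^ n) (vm + y)) ((Lm : Set V)) := by
        intro n
        have h1 := hpic_infDist (‖(g⁻¹ ^ n) (vm + y)‖⁻¹ • (g⁻¹ ^ n) (vm + y))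
        rw [map_smul, hpicq n, norm_smul, norm_inv, norm_norm] at h1
        exact h1
      have hlim : Tendsto (fun n : ℕ => ‖pic‖ *
          Metric.infDist (‖(g⁻¹ ^ n) (vm + y)‖⁻¹ • (g⁻¹ ^ n) (vm + y)) ((Lm : Set V)))
          atTop (nhds 0) := by
        simpa using (hrepel (vm + y) hwPW).const_mul ‖pic‖
      refine squeeze_zero (fun n => ?_) hbd hlim
      positivity
    refine aux_squeeze _ _ ‖vm‖ (fun n => by positivity) (fun n => ?_) hr
    -- the key inequality
    set Qn := ‖(g⁻¹ ^ n) (vm + y)‖ with hQn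
    set Yn := ‖(g⁻¹ ^ n) y‖ with hYn
    have hQpos : 0 < Qn := hqnorm n
    have hYpos : 0 ≤ Yn := norm_nonneg _
    have hMpos : 0 < mu ^ n := pow_pos hmupos n
    have hQle : Qn ≤ (mu ^ n)⁻¹ * ‖vm‖ + Yn := by
      rw [hQn, hq n]
      calc ‖(mu⁻¹) ^ n • vm + (g⁻¹ ^ n) y‖ ≤ ‖(mu⁻¹) ^ n • vm‖ + ‖(g⁻¹ ^ n) y‖ := norm_add_le _ _
      _ = (mu ^ n)⁻¹ * ‖vm‖ + Yn := by
        rw [norm_smul, Real.norm_eq_abs, ← inv_pow, abs_of_pos (pow_pos (by positivity) n), inv_pow]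
    -- goal: mu ^ n * Yn ≤ Qn⁻¹ * Yn * (‖vm‖ + mu ^ n * Yn)
    have key : mu ^ n * Yn * Qn ≤ Yn * (‖vm‖ + mu ^ n * Yn) := by
      have h1 : mu ^ n * Yn * Qn ≤ mu ^ n * Yn * ((mu ^ n)⁻¹ * ‖vm‖ + Yn) :=
        mul_le_mul_of_nonneg_left hQle (by positivity)
      have h2 : mu ^ n * Yn * ((mu ^ n)⁻¹ * ‖vm‖ + Yn)
          = Yn * ‖vm‖ * (mu ^ n * (mu ^ n)⁻¹) + mu ^ n * Yn * Yn := by ring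
      rw [mul_inv_cancel₀ (ne_of_gt hMpos)] at h2
      nlinarith [h1, h2]
    have heq : Qn⁻¹ * Yn * (‖vm‖ + mu ^ n * Yn) = Yn * (‖vm‖ + mu ^ n * Yn) / Qn := by ring
    rw [heq, le_div_iff₀ hQpos]
    linarith [key]
  -- Lemma B : xip is nonnegative on C
  have hxipos : ∀ x ∈ C, 0 ≤ xip x := by
    intro x hx
    by_contra hneg
    push_neg at hneg
    have hy : x - xip x • vm ∈ Lp ⊔ W := hdec x
    have hxn : ∀ n : ℕ, mu ^ n • ((g⁻¹ ^ n) x) ∈ C := by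
      intro n
      exact hcone _ (hCn' n x hx) _ (pow_pos hmupos n)
    have hxneq : ∀ n : ℕ, mu ^ n • ((g⁻¹ ^ n) x)
        = xip x • vm + mu ^ n • ((g⁻¹ ^ n) (x - xip x • vm)) := by
      intro n
      have h1 : (g⁻¹ ^ n) x = (g⁻¹ ^ n) (x - xip x • vm) + xip x • ((mu⁻¹) ^ n • vm) := by
        rw [← hginvn_vm n, ← map_smul, ← map_add, sub_add_cancel]
      rw [h1, smul_add, smul_smul, smul_smul]
      have h2 : mu ^ n * xip x * (mu⁻¹) ^ n = xip x := by
        rw [mul_comm (mu ^ n) (xip x), mul_assoc, inv_pow,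
          mul_inv_cancel₀ (ne_of_gt (pow_pos hmupos n)), mul_one]
      rw [h2]
      abel
    have hlim : Tendsto (fun n : ℕ => mu ^ n • ((g⁻¹ ^ n) x)) atTop (nhds (xip x • vm)) := by
      rw [tendsto_iff_norm_sub_tendsto_zero]
      have : ∀ n : ℕ, ‖mu ^ n • ((g⁻¹ ^ n) x) - xip x • vm‖
          = mu ^ n * ‖(g⁻¹ ^ n) (x - xip x • vm)‖ := by
        intro n
        rw [hxneq n]
        rw [add_sub_cancel_left, norm_smul, Real.norm_eq_abs, abs_of_pos (pow_pos hmupos n)]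
      simp only [this]
      exact hA _ hy
    have hmem : xip x • vm ∈ closure C :=
      mem_closure_of_tendsto hlim (Eventually.of_forall hxn)
    have h1 : (-(xip x)) • vm ∈ closure C := hKcone _ (by linarith) vm hvmC
    have h2 : -((-(xip x)) • vm) ∈ closure C := by
      rw [neg_smul, neg_neg]; exact hmem
    have h0 := hproper' _ h1 h2
    rw [smul_eq_zero] at h0
    rcases h0 with h' | h'
    · linarith [neg_eq_zero.1 h']
    · exact hvm h'
  -- nonnegativity on the closure
  have hnn : ∀ (φ : V →ₗ[ℝ] ℝ), (∀ c ∈ C, 0 ≤ φ c) → ∀ x ∈ closure C, 0 ≤ φ x := by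
    intro φ hφ x hx
    have hφcont : Continuous ⇑φ := φ.continuous_of_finiteDimensional
    have hclosed : IsClosed {y : V | 0 ≤ φ y} := isClosed_le continuous_const hφcont
    have hsub : closure C ⊆ {y : V | 0 ≤ φ y} := closure_minimal hφ hclosed
    exact hsub hx
  -- Lemma C : core vanishing statement
  have hcore : (∃ s > (0:ℝ), ∃ t > (0:ℝ), s • vp + t • vm ∈ C) →
      ∀ φ : V →ₗ[ℝ] ℝ, (∀ c ∈ C, 0 ≤ φ c) → φ vp = 0 → ∀ w ∈ Lp ⊔ W, φ w = 0 := by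
    rintro ⟨s, hs, t, ht, hx⟩ φ hφC hφvp
    have hφvm : 0 ≤ φ vm := hnn φ hφC vm hvmC
    have hW0 : ∀ u ∈ W, φ u = 0 := by
      intro u hu
      rcases eq_or_ne u 0 with rfl | hu0
      · exact map_zero φ
      obtain ⟨δ, hδ, hball⟩ := Metric.isOpen_iff.1 hopen _ hx
      have hkey : ∀ n : ℕ, |φ u| ≤ ((2/δ) * (t * φ vm)) * (mu ^ n * ‖(g⁻¹ ^ n) u‖) := by
        intro n
        set un := (g⁻¹ ^ n) u with hun
        have hun0 : un ≠ 0 := fun h => hu0 ((map_eq_zero_iff _ (g⁻¹ ^ n).injective).1 h)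
        have hunpos : 0 < ‖un‖ := norm_pos_iff.2 hun0
        have hgun : (g ^ n) un = u := by
          rw [hun, ← hmul, inv_pow, mul_inv_cancel]; rfl
        have hmemball : ∀ ε : ℝ, |ε| = δ/2 → (s • vp + t • vm) + (ε * ‖un‖⁻¹) • un ∈ C := by
          intro ε hε
          apply hball
          rw [Metric.mem_ball, dist_eq_norm, add_sub_cancel_left, norm_smul,
            Real.norm_eq_abs, abs_mul, hε, abs_of_pos (inv_pos.2 hunpos),
            mul_assoc, inv_mul_cancel₀ (ne_of_gt hunpos), mul_one]
          linarith
        have himg : ∀ ε : ℝ, |ε| = δ/2 →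
            0 ≤ t * mu ^ n * φ vm + (ε * ‖un‖⁻¹) * φ u := by
          intro ε hε
          have hC1 := hCn n _ (hmemball ε hε)
          have heq : (g ^ n) ((s • vp + t • vm) + (ε * ‖un‖⁻¹) • un)
              = (s * lam ^ n) • vp + (t * mu ^ n) • vm + (ε * ‖un‖⁻¹) • u := by
            rw [map_add, map_add, map_smul, map_smul, map_smul, hgn_vp, hgn_vm, hgun,
              smul_smul, smul_smul]
          rw [heq] at hC1
          have := hφC _ hC1
          rw [map_add, map_add, map_smul, map_smul, map_smul, smul_eq_mul, smul_eq_mul,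
            smul_eq_mul, hφvp, mul_zero, zero_add] at this
          linarith
        have h1 := himg (δ/2) (by rw [abs_of_pos]; linarith)
        have h2 := himg (-(δ/2)) (by rw [abs_neg, abs_of_pos]; linarith)
        have hb : (δ/2) * ‖un‖⁻¹ * |φ u| ≤ t * mu ^ n * φ vm := by
          rcases abs_cases (φ u) with ⟨he, _⟩ | ⟨he, _⟩
          · rw [he]; nlinarith
          · rw [he]; nlinarith
        have hδun : 0 < (δ/2) * ‖un‖⁻¹ := by positivity
        rw [← le_div_iff₀' hδun] at hb
        calc |φ u| ≤ t * mu ^ n * φ vm / ((δ/2) * ‖un‖⁻¹) := hb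
        _ = ((2/δ) * (t * φ vm)) * (mu ^ n * ‖un‖) := by
          field_simp
      have hlim : Tendsto (fun n : ℕ => ((2/δ) * (t * φ vm)) * (mu ^ n * ‖(g⁻¹ ^ n) u‖))
          atTop (nhds 0) := by
        simpa using (hA u (Submodule.mem_sup_right hu)).const_mul ((2/δ) * (t * φ vm))
      have : |φ u| ≤ 0 := ge_of_tendsto' hlim hkey
      have := le_antisymm this (abs_nonneg _)
      exact abs_eq_zero.1 this
    intro w hw
    obtain ⟨p, hp, u, hu, rfl⟩ := Submodule.mem_sup.1 hw
    obtain ⟨a, rfl⟩ := Submodule.mem_span_singleton.1 hp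
    rw [map_add, map_smul, hφvp, smul_zero, zero_add]
    exact hW0 u hu
  -- ================= final assembly =================
  have hxipne : xip ≠ 0 := by
    intro h
    rw [h] at hxivm
    simp at hxivm
  refine ⟨⟨?_, ?_⟩, ?_⟩
  · -- axis meets C → smooth
    intro hax φ ψ hφ0 hφC hφvp hψ0 hψC hψvp
    have hφPW := hcore hax φ hφC hφvp
    have hψPW := hcore hax ψ hψC hψvp
    have hzero : ∀ θ : V →ₗ[ℝ] ℝ, (∀ y ∈ Lp ⊔ W, θ y = 0) → θ vm = 0 → θ = 0 := by
      intro θ hPW hvm'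
      ext v
      have hv : v ∈ Lp ⊔ Lm ⊔ W := hsup_top ▸ Submodule.mem_top
      obtain ⟨z, hz, w1, hw1, rfl⟩ := Submodule.mem_sup.1 hv
      obtain ⟨p, hp, m1, hm1, rfl⟩ := Submodule.mem_sup.1 hz
      obtain ⟨c, rfl⟩ := Submodule.mem_span_singleton.1 hm1
      simp [map_add, map_smul, hPW p (Submodule.mem_sup_left hp),
        hPW w1 (Submodule.mem_sup_right hw1), hvm']
    have hφvm : φ vm ≠ 0 := fun h => hφ0 (hzero φ hφPW h)
    refine ⟨ψ vm / φ vm, ?_⟩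
    have h1 : ψ - (ψ vm / φ vm) • φ = 0 := by
      apply hzero
      · intro y hy
        simp [hψPW y hy, hφPW y hy]
      · simp [div_mul_cancel₀ _ hφvm]
    exact sub_eq_zero.1 h1
  · -- smooth → axis meets C
    intro hsm
    by_cases hmem : (2⁻¹ : ℝ) • vp + (2⁻¹ : ℝ) • vm ∈ C
    · exact ⟨2⁻¹, by norm_num, 2⁻¹, by norm_num, hmem⟩
    exfalso
    have hmK : (2⁻¹ : ℝ) • vp + (2⁻¹ : ℝ) • vm ∈ closure C :=
      hconv.closure hvpC hvmC (by norm_num) (by norm_num) (by norm_num)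
    obtain ⟨f, hf⟩ := geometric_hahn_banach_open_point hconv hopen hmem
    have hfc : ∀ c ∈ C, f c ≤ 0 := by
      intro c hc
      by_contra hpos
      push_neg at hpos
      have h1 : ∀ t : ℝ, 0 < t → t * f c < f ((2⁻¹ : ℝ) • vp + (2⁻¹ : ℝ) • vm) := by
        intro t ht
        have := hf _ (hcone c hc t ht)
        rwa [map_smul, smul_eq_mul] at this
      have h2 := h1 ((|f ((2⁻¹ : ℝ) • vp + (2⁻¹ : ℝ) • vm)| + 1) / f c)
        (by positivity)
      rw [div_mul_cancel₀ _ (ne_of_gt hpos)] at h2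
      linarith [le_abs_self (f ((2⁻¹ : ℝ) • vp + (2⁻¹ : ℝ) • vm))]
    have hfm_nonneg : 0 ≤ f ((2⁻¹ : ℝ) • vp + (2⁻¹ : ℝ) • vm) := by
      by_contra hneg
      push_neg at hneg
      have h1 : ∀ t : ℝ, 0 < t → t * f c₀ < f ((2⁻¹ : ℝ) • vp + (2⁻¹ : ℝ) • vm) := by
        intro t ht
        have := hf _ (hcone c₀ hc₀ t ht)
        rwa [map_smul, smul_eq_mul] at this
      have hc0neg : f c₀ < 0 := by
        have := h1 1 one_pos; linarith
      have htpos : 0 < f ((2⁻¹ : ℝ) • vp + (2⁻¹ : ℝ) • vm) / (2 * f c₀) :=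
        div_pos_of_neg_of_neg hneg (by linarith)
      have h2 := h1 _ htpos
      have h3 : f ((2⁻¹ : ℝ) • vp + (2⁻¹ : ℝ) • vm) / (2 * f c₀) * f c₀
          = f ((2⁻¹ : ℝ) • vp + (2⁻¹ : ℝ) • vm) / 2 := by
        field_simp [ne_of_lt hc0neg]
      rw [h3] at h2
      linarith
    set φ₁ : V →ₗ[ℝ] ℝ := -(f : V →ₗ[ℝ] ℝ) with hφ₁def
    have hφ₁app : ∀ x : V, φ₁ x = -(f x) := fun x => rfl
    have hφC' : ∀ c ∈ C, 0 ≤ φ₁ c := by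
      intro c hc
      rw [hφ₁app]
      linarith [hfc c hc]
    have hfvp : f vp ≤ 0 := by
      have := hnn φ₁ hφC' vp hvpC
      rw [hφ₁app] at this
      linarith
    have hfvm : f vm ≤ 0 := by
      have := hnn φ₁ hφC' vm hvmC
      rw [hφ₁app] at this
      linarith
    have hexp : f ((2⁻¹ : ℝ) • vp + (2⁻¹ : ℝ) • vm) = 2⁻¹ * f vp + 2⁻¹ * f vm := by
      rw [map_add, map_smul, map_smul, smul_eq_mul, smul_eq_mul]
    have hfvp0 : f vp = 0 := by linarith
    have hfvm0 : f vm = 0 := by linarith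
    have hfm0 : f ((2⁻¹ : ℝ) • vp + (2⁻¹ : ℝ) • vm) = 0 := by
      rw [hexp, hfvp0, hfvm0]; ring
    have hφ₁vp : φ₁ vp = 0 := by rw [hφ₁app, hfvp0, neg_zero]
    have hφ₁ne : φ₁ ≠ 0 := by
      intro h0
      have hlt : f c₀ < 0 := by
        have := hf c₀ hc₀
        rwa [hfm0] at this
      have : φ₁ c₀ = 0 := by rw [h0]; rfl
      rw [hφ₁app] at this
      linarith
    obtain ⟨r, hr⟩ := hsm φ₁ xip hφ₁ne hφC' hφ₁vp hxipne hxipos hxivp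
    have hval : xip vm = (r • φ₁) vm := by rw [← hr]
    rw [hxivm, LinearMap.smul_apply, hφ₁app, hfvm0, neg_zero, smul_eq_mul, mul_zero] at hval
    exact one_ne_zero hval
  · -- the "moreover" part
    intro hax φ hφ0 hφC hφvp
    exact hcore hax φ hφC hφvp
end

section
/- Let V₁ and V₂ be finite-dimensional real normed vector spaces with dim V₁ ≥ 1, dim V₂ ≥ 1 and dim V₁ + dim V₂ ≥ 3. For i = 1, 2 let C_i ⊆ V_i be a properly convex open cone, and let C = C₁ × C₂ ⊆ V₁ × V₂ (the decomposable cone C₁ + C₂ in V₁ ⊕ V₂). Then for every nonzero vector x in (closure C) \ C, there exists y in (closure C) \ C which is not a scalar multiple of x and such that the whole segment [x, y] = {t·x + (1 − t)·y : t ∈ [0, 1]} is contained in (closure C) \ C. (This is the first claim in the proof of the Lemma of Section 2.7: the boundary of a decomposable properly convex open set contains no strongly extremal point; hence reducible compact convex projective manifolds are higher-rank.) -/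
section Aux

variable {V : Type*} [NormedAddCommGroup V] [NormedSpace ℝ V] {C : Set V}

lemma pc_zero_not_mem [FiniteDimensional ℝ V] (hC : IsProperlyConvexOpenCone C)
    (hd : 1 ≤ Module.finrank ℝ V) : (0 : V) ∉ C := by
  intro h0
  have hnt : Nontrivial V := Module.finrank_pos_iff (R := ℝ) (M := V) |>.1 (by omega)
  obtain ⟨v, hv⟩ := exists_ne (0 : V)
  obtain ⟨ε, hε, hball⟩ := Metric.isOpen_iff.1 hC.2.1 0 h0
  have hvn : (0 : ℝ) < ‖v‖ := norm_pos_iff.2 hv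
  set u := (ε / (2 * ‖v‖)) • v with hu
  have hcoef : (0 : ℝ) < ε / (2 * ‖v‖) := by positivity
  have hun : ‖u‖ = ε / 2 := by
    rw [hu, norm_smul, Real.norm_eq_abs, abs_of_pos hcoef]
    field_simp
  have hu0 : u ≠ 0 := smul_ne_zero (ne_of_gt hcoef) hv
  have huC : u ∈ C := hball (by rw [Metric.mem_ball, dist_zero_right, hun]; linarith)
  have hnuC : -u ∈ C := hball (by rw [Metric.mem_ball, dist_zero_right, norm_neg, hun]; linarith)
  have : u ∈ closure C ∩ (-closure C) :=
    ⟨subset_closure huC, by simpa using subset_closure hnuC⟩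
  exact hu0 (hC.2.2.2.2 this)

lemma pc_exists_ne_zero [FiniteDimensional ℝ V] (hC : IsProperlyConvexOpenCone C)
    (hd : 1 ≤ Module.finrank ℝ V) : ∃ c ∈ C, c ≠ 0 := by
  obtain ⟨c, hc⟩ := hC.1
  exact ⟨c, hc, fun h => pc_zero_not_mem hC hd (h ▸ hc)⟩

lemma pc_zero_mem_closure (hC : IsProperlyConvexOpenCone C) : (0 : V) ∈ closure C := by
  obtain ⟨c, hc⟩ := hC.1
  have htend : Filter.Tendsto (fun n : ℕ => (1 / ((n : ℝ) + 1)) • c) Filter.atTop (nhds 0) := by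
    simpa using (tendsto_one_div_add_atTop_nhds_zero_nat (𝕜 := ℝ)).smul_const c
  exact mem_closure_of_tendsto htend (Filter.Eventually.of_forall fun n =>
    hC.2.2.2.1 c hc _ (by positivity))

lemma pc_smul_not_mem (hC : IsProperlyConvexOpenCone C) {z : V} (hz : z ∉ C) {s : ℝ}
    (hs : 0 < s) : s • z ∉ C := by
  intro h
  apply hz
  have := hC.2.2.2.1 _ h s⁻¹ (by positivity)
  rwa [smul_smul, inv_mul_cancel₀ hs.ne', one_smul] at this

lemma pc_not_smul (hC : IsProperlyConvexOpenCone C) {x z : V} (hx : x ∈ C)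
    (hzc : z ∈ closure C) (hz : z ∉ C) (hz0 : z ≠ 0) : ∀ r : ℝ, z ≠ r • x := by
  intro r h
  rcases lt_trichotomy r 0 with hr | hr | hr
  · have hnz : -z ∈ C := by
      rw [h, ← neg_smul]
      exact hC.2.2.2.1 x hx (-r) (by linarith)
    have : z ∈ closure C ∩ (-closure C) := ⟨hzc, by simpa using subset_closure hnz⟩
    exact hz0 (hC.2.2.2.2 this)
  · rw [hr, zero_smul] at h; exact hz0 h
  · exact hz (h ▸ hC.2.2.2.1 x hx r hr)

lemma pc_frontier_ne_zero [FiniteDimensional ℝ V] (hC : IsProperlyConvexOpenCone C)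
    (hd : 2 ≤ Module.finrank ℝ V) : ∃ z, z ∈ closure C ∧ z ∉ C ∧ z ≠ 0 := by
  by_contra h
  push_neg at h
  obtain ⟨c, hc, hc0⟩ := pc_exists_ne_zero hC (by omega)
  have hneg : -c ∉ closure C := by
    intro hcl
    have : -c ∈ closure C ∩ (-closure C) := ⟨hcl, by simpa using subset_closure hc⟩
    exact hc0 (by simpa [neg_eq_zero] using hC.2.2.2.2 this)
  have hrank : 1 < Module.rank ℝ V := by
    rw [← Module.finrank_eq_rank ℝ V]
    exact_mod_cast (by omega : 1 < Module.finrank ℝ V)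
  have hconn := isConnected_compl_singleton_of_one_lt_rank hrank (0 : V)
  have hsub : ({(0 : V)}ᶜ : Set V) ⊆ C ∪ (closure C)ᶜ := by
    intro z hz0
    by_cases hzC : z ∈ C
    · exact Or.inl hzC
    · by_cases hzcl : z ∈ closure C
      · exact absurd (h z hzcl hzC) (by simpa using hz0)
      · exact Or.inr hzcl
  obtain ⟨w, -, hw1, hw2⟩ := hconn.isPreconnected C (closure C)ᶜ hC.2.1
    isClosed_closure.isOpen_compl hsub
    ⟨c, by simpa using hc0, hc⟩ ⟨-c, by simpa [neg_eq_zero] using hc0, hneg⟩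
  exact hw2 (subset_closure hw1)

end Aux

/-- The first claim in the proof of the Lemma of Section 2.7: the boundary of a
decomposable properly convex cone `C = C₁ × C₂` contains no strongly extremal point:
every nonzero boundary vector `x` lies on a nontrivial boundary segment `[x, y]` with
`y` not a scalar multiple of `x`. -/
theorem decomposable_no_strongly_extremal
    {V₁ V₂ : Type*} [NormedAddCommGroup V₁] [NormedSpace ℝ V₁] [FiniteDimensional ℝ V₁]
    [NormedAddCommGroup V₂] [NormedSpace ℝ V₂] [FiniteDimensional ℝ V₂]
    (h1 : 1 ≤ Module.finrank ℝ V₁) (h2 : 1 ≤ Module.finrank ℝ V₂)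
    (h3 : 3 ≤ Module.finrank ℝ V₁ + Module.finrank ℝ V₂)
    (C₁ : Set V₁) (C₂ : Set V₂)
    (hC₁ : IsProperlyConvexOpenCone C₁) (hC₂ : IsProperlyConvexOpenCone C₂) :
    ∀ x ∈ closure (C₁ ×ˢ C₂) \ (C₁ ×ˢ C₂), x ≠ 0 →
      ∃ y ∈ closure (C₁ ×ˢ C₂) \ (C₁ ×ˢ C₂), (∀ r : ℝ, y ≠ r • x) ∧
        ∀ t ∈ Set.Icc (0 : ℝ) 1,
          t • x + (1 - t) • y ∈ closure (C₁ ×ˢ C₂) \ (C₁ ×ˢ C₂) := by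
  have hclos : closure (C₁ ×ˢ C₂) = closure C₁ ×ˢ closure C₂ := closure_prod_eq
  have hconv : Convex ℝ (closure (C₁ ×ˢ C₂)) := ((hC₁.2.2.1).prod hC₂.2.2.1).closure
  rintro ⟨x₁, x₂⟩ ⟨hxcl, hxC⟩ hx0
  rw [hclos, Set.mem_prod] at hxcl
  obtain ⟨hx₁cl, hx₂cl⟩ := hxcl
  rw [Set.mem_prod] at hxC
  push_neg at hxC
  -- a uniform way to conclude
  have key : ∀ y : V₁ × V₂, y.1 ∈ closure C₁ → y.2 ∈ closure C₂ →
      (y.1 ∉ C₁ ∨ y.2 ∉ C₂) → (∀ r : ℝ, y ≠ r • (x₁, x₂)) →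
      (∀ t : ℝ, 0 ≤ t → t ≤ 1 →
        (t • x₁ + (1 - t) • y.1 ∉ C₁ ∨ t • x₂ + (1 - t) • y.2 ∉ C₂)) →
      ∃ y ∈ closure (C₁ ×ˢ C₂) \ (C₁ ×ˢ C₂), (∀ r : ℝ, y ≠ r • ((x₁, x₂) : V₁ × V₂)) ∧
        ∀ t ∈ Set.Icc (0 : ℝ) 1,
          t • ((x₁, x₂) : V₁ × V₂) + (1 - t) • y ∈ closure (C₁ ×ˢ C₂) \ (C₁ ×ˢ C₂) := by
    intro y hy1 hy2 hyC hyr hseg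
    have hycl : y ∈ closure (C₁ ×ˢ C₂) := by
      rw [hclos]; exact Set.mem_prod.2 ⟨hy1, hy2⟩
    have hxcl' : ((x₁, x₂) : V₁ × V₂) ∈ closure (C₁ ×ˢ C₂) := by
      rw [hclos]; exact Set.mem_prod.2 ⟨hx₁cl, hx₂cl⟩
    refine ⟨y, ⟨hycl, ?_⟩, hyr, ?_⟩
    · rw [Set.mem_prod]; tauto
    · intro t ht
      refine ⟨hconv hxcl' hycl ht.1 (by linarith [ht.2]) (by ring), ?_⟩
      have := hseg t ht.1 ht.2
      rw [Set.mem_prod]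
      rcases this with h | h
      · intro hmem; exact h (by simpa using hmem.1)
      · intro hmem; exact h (by simpa using hmem.2)
  -- case analysis
  by_cases hx₁C : x₁ ∈ C₁
  · -- then x₂ ∉ C₂
    have hx₂C : x₂ ∉ C₂ := hxC hx₁C
    by_cases hx₂0 : x₂ = 0
    · -- Case III-a : x₁ ∈ C₁, x₂ = 0
      subst hx₂0
      have h0C₂ : (0 : V₂) ∉ C₂ := hx₂C
      by_cases hd₂ : 2 ≤ Module.finrank ℝ V₂
      · obtain ⟨z₂, hz₂cl, hz₂C, hz₂0⟩ := pc_frontier_ne_zero hC₂ hd₂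
        refine key (x₁, z₂) hx₁cl hz₂cl (Or.inr hz₂C) ?_ ?_
        · intro r h
          rw [Prod.smul_mk, Prod.mk.injEq] at h
          exact hz₂0 (h.2.trans (smul_zero r))
        · intro t ht0 ht1
          refine Or.inr ?_
          simp only [smul_zero, zero_add]
          rcases eq_or_lt_of_le ht1 with h | h
          · rw [← h]; simpa using h0C₂
          · exact pc_smul_not_mem hC₂ hz₂C (by linarith)
      · have hd₁ : 2 ≤ Module.finrank ℝ V₁ := by omega
        obtain ⟨z₁, hz₁cl, hz₁C, hz₁0⟩ := pc_frontier_ne_zero hC₁ hd₁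
        refine key (z₁, 0) hz₁cl (pc_zero_mem_closure hC₂) (Or.inr h0C₂) ?_ ?_
        · intro r h
          rw [Prod.smul_mk, Prod.mk.injEq] at h
          exact pc_not_smul hC₁ hx₁C hz₁cl hz₁C hz₁0 r h.1
        · intro t ht0 ht1
          refine Or.inr ?_
          simpa using h0C₂
    · -- Case II : x₂ ∉ C₂, x₂ ≠ 0
      obtain ⟨c₁, hc₁, hc₁0⟩ := pc_exists_ne_zero hC₁ h1
      have hz : ∃ z₁ ∈ C₁, z₁ ≠ x₁ := by
        by_cases h : c₁ = x₁
        · refine ⟨(2 : ℝ) • c₁, hC₁.2.2.2.1 c₁ hc₁ 2 (by norm_num), ?_⟩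
          rw [← h]
          intro hh
          have : ((2 : ℝ) - 1) • c₁ = 0 := by
            rw [sub_smul, one_smul, hh, sub_self]
          simp only [show (2 : ℝ) - 1 = 1 by norm_num, one_smul] at this
          exact hc₁0 this
        · exact ⟨c₁, hc₁, h⟩
      obtain ⟨z₁, hz₁, hz₁ne⟩ := hz
      refine key (z₁, x₂) (subset_closure hz₁) hx₂cl (Or.inr hx₂C) ?_ ?_
      · intro r h
        rw [Prod.smul_mk, Prod.mk.injEq] at h
        have hr1 : r = 1 := by
          have : (r - 1) • x₂ = 0 := by rw [sub_smul, one_smul, ← h.2, sub_self]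
          rcases smul_eq_zero.1 this with h' | h'
          · linarith [sub_eq_zero.1 h']
          · exact absurd h' hx₂0
        rw [hr1] at h; simp only [one_smul] at h
        exact hz₁ne h.1
      · intro t ht0 ht1
        refine Or.inr ?_
        have : t • x₂ + (1 - t) • x₂ = x₂ := by
          rw [← add_smul]; ring_nf; rw [one_smul]
        rw [this]; exact hx₂C
  · -- x₁ ∉ C₁
    by_cases hx₁0 : x₁ = 0
    · subst hx₁0
      have h0C₁ : (0 : V₁) ∉ C₁ := hx₁C
      by_cases hx₂C : x₂ ∈ C₂
      · -- Case III-b : x₁ = 0, x₂ ∈ C₂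
        by_cases hd₁ : 2 ≤ Module.finrank ℝ V₁
        · obtain ⟨z₁, hz₁cl, hz₁C, hz₁0⟩ := pc_frontier_ne_zero hC₁ hd₁
          refine key (z₁, x₂) hz₁cl hx₂cl (Or.inl hz₁C) ?_ ?_
          · intro r h
            rw [Prod.smul_mk, Prod.mk.injEq] at h
            exact hz₁0 (h.1.trans (smul_zero r))
          · intro t ht0 ht1
            refine Or.inl ?_
            simp only [smul_zero, zero_add]
            rcases eq_or_lt_of_le ht1 with h | h
            · rw [← h]; simpa using h0C₁
            · exact pc_smul_not_mem hC₁ hz₁C (by linarith)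
        · have hd₂ : 2 ≤ Module.finrank ℝ V₂ := by omega
          obtain ⟨z₂, hz₂cl, hz₂C, hz₂0⟩ := pc_frontier_ne_zero hC₂ hd₂
          refine key (0, z₂) (pc_zero_mem_closure hC₁) hz₂cl (Or.inl h0C₁) ?_ ?_
          · intro r h
            rw [Prod.smul_mk, Prod.mk.injEq] at h
            exact pc_not_smul hC₂ hx₂C hz₂cl hz₂C hz₂0 r h.2
          · intro t ht0 ht1
            refine Or.inl ?_
            simpa using h0C₁
      · -- x₁ = 0 ∉ C₁, x₂ ∉ C₂, x₂ ≠ 0 (since x ≠ 0)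
        have hx₂0 : x₂ ≠ 0 := by
          intro h; exact hx0 (by simp [h])
        obtain ⟨c₁, hc₁, hc₁0⟩ := pc_exists_ne_zero hC₁ h1
        refine key (c₁, x₂) (subset_closure hc₁) hx₂cl (Or.inr hx₂C) ?_ ?_
        · intro r h
          rw [Prod.smul_mk, Prod.mk.injEq] at h
          exact hc₁0 (h.1.trans (smul_zero r))
        · intro t ht0 ht1
          refine Or.inr ?_
          have : t • x₂ + (1 - t) • x₂ = x₂ := by
            rw [← add_smul]; ring_nf; rw [one_smul]
          rw [this]; exact hx₂C
    · -- Case I : x₁ ∉ C₁, x₁ ≠ 0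
      obtain ⟨c₂, hc₂, hc₂0⟩ := pc_exists_ne_zero hC₂ h2
      have hz : ∃ z₂ ∈ C₂, z₂ ≠ x₂ := by
        by_cases h : c₂ = x₂
        · refine ⟨(2 : ℝ) • c₂, hC₂.2.2.2.1 c₂ hc₂ 2 (by norm_num), ?_⟩
          rw [← h]
          intro hh
          have : ((2 : ℝ) - 1) • c₂ = 0 := by
            rw [sub_smul, one_smul, hh, sub_self]
          simp only [show (2 : ℝ) - 1 = 1 by norm_num, one_smul] at this
          exact hc₂0 this
        · exact ⟨c₂, hc₂, h⟩
      obtain ⟨z₂, hz₂, hz₂ne⟩ := hz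
      refine key (x₁, z₂) hx₁cl (subset_closure hz₂) (Or.inl hx₁C) ?_ ?_
      · intro r h
        rw [Prod.smul_mk, Prod.mk.injEq] at h
        have hr1 : r = 1 := by
          have : (r - 1) • x₁ = 0 := by rw [sub_smul, one_smul, ← h.1, sub_self]
          rcases smul_eq_zero.1 this with h' | h'
          · linarith [sub_eq_zero.1 h']
          · exact absurd h' hx₁0
        rw [hr1] at h; simp only [one_smul] at h
        exact hz₂ne h.2
      · intro t ht0 ht1
        refine Or.inl ?_
        have : t • x₁ + (1 - t) • x₁ = x₁ := by
          rw [← add_smul]; ring_nf; rw [one_smul]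
        rw [this]; exact hx₁C
end

section
/- Let V be a finite-dimensional real normed vector space, let k ≥ 2, and let γ₁, …, γ_k ∈ GL(V) be biproximal with data (L_i⁺, L_i⁻, W_i) for i = 1, …, k. Assume that the 2k lines L₁⁺, L₁⁻, …, L_k⁺, L_k⁻ are pairwise distinct, and that for all i ≠ j and all signs α, β ∈ {+, −} the line L_i^α is not contained in L_j^β + W_j. Then there exists N₀ ∈ ℕ such that for every N ≥ N₀: the elements γ₁^N, …, γ_k^N freely generate a free subgroup of GL(V) (i.e. the group homomorphism from the free group on k generators to GL(V) sending the i-th generator to γ_i^N is injective), and the subgroup they generate is discrete in GL(V). (The freeness and discreteness conclusions of Lemma 4.7.) -/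
open Filter

section Helpers
open Metric

variable {V : Type*} [NormedAddCommGroup V] [NormedSpace ℝ V]

theorem infDist_smul_le (S : Submodule ℝ V) (c : ℝ) (v : V) :
    infDist (c • v) (S : Set V) ≤ |c| * infDist v S := by
  rcases eq_or_ne c 0 with rfl | hc
  · simp [infDist_zero_of_mem S.zero_mem]
  · refine le_of_forall_pos_le_add fun ε hε => ?_
    have hcpos : 0 < |c| := abs_pos.mpr hc
    obtain ⟨y, hy, hd⟩ := (infDist_lt_iff (x := v) ⟨0, S.zero_mem⟩).mp
      (show infDist v (S : Set V) < infDist v S + ε / |c| by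
        have : 0 < ε / |c| := by positivity
        linarith)
    calc infDist (c • v) (S : Set V) ≤ dist (c • v) (c • y) :=
          infDist_le_dist_of_mem (S.smul_mem c hy)
      _ = |c| * dist v y := by rw [dist_smul₀, Real.norm_eq_abs]
      _ ≤ |c| * (infDist v S + ε / |c|) := mul_le_mul_of_nonneg_left hd.le hcpos.le
      _ = |c| * infDist v S + ε := by rw [mul_add, mul_div_cancel₀ _ hcpos.ne']

theorem infDist_smul_eq (S : Submodule ℝ V) (c : ℝ) (v : V) :
    infDist (c • v) (S : Set V) = |c| * infDist v S := by
  rcases eq_or_ne c 0 with rfl | hc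
  · simp [infDist_zero_of_mem S.zero_mem]
  · refine le_antisymm (infDist_smul_le S c v) ?_
    have h2 := infDist_smul_le S c⁻¹ (c • v)
    rw [inv_smul_smul₀ hc, abs_inv] at h2
    have hcpos : 0 < |c| := abs_pos.mpr hc
    calc |c| * infDist v (S : Set V) ≤ |c| * (|c|⁻¹ * infDist (c • v) S) := by nlinarith
      _ = infDist (c • v) (S : Set V) := by field_simp

theorem infDist_add_le' (S : Submodule ℝ V) (v p : V) (hp : p ∈ S) :
    infDist (v + p) (S : Set V) ≤ infDist v S := by
  refine le_of_forall_pos_le_add fun ε hε => ?_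
  obtain ⟨y, hy, hd⟩ := (infDist_lt_iff (x := v) ⟨0, S.zero_mem⟩).mp
    (show infDist v (S : Set V) < infDist v S + ε by linarith)
  calc infDist (v + p) (S : Set V) ≤ dist (v + p) (y + p) :=
        infDist_le_dist_of_mem (S.add_mem hy hp)
    _ = dist v y := dist_add_right v y p
    _ ≤ infDist v S + ε := hd.le

theorem infDist_add_mem (S : Submodule ℝ V) (v p : V) (hp : p ∈ S) :
    infDist (v + p) (S : Set V) = infDist v S := by
  refine le_antisymm (infDist_add_le' S v p hp) ?_
  have := infDist_add_le' S (v + p) (-p) (S.neg_mem hp)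
  simpa using this

/-- trivial-intersection subspaces are uniformly transverse. -/
theorem exists_sep [FiniteDimensional ℝ V] (S T : Submodule ℝ V) (h : S ⊓ T = ⊥) :
    ∃ c > 0, ∀ v : V, c * ‖v‖ ≤ infDist v (S : Set V) + infDist v (T : Set V) := by
  by_cases hV : Subsingleton V
  · exact ⟨1, one_pos, fun v => by
      have : v = 0 := Subsingleton.elim v 0
      simp [this, infDist_zero_of_mem S.zero_mem, infDist_zero_of_mem T.zero_mem]⟩
  · have : Nontrivial V := not_subsingleton_iff_nontrivial.mp hV
    have hsph : (Metric.sphere (0:V) 1).Nonempty := NormedSpace.sphere_nonempty.mpr zero_le_one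
    have hcont : Continuous fun v : V => infDist v (S : Set V) + infDist v (T : Set V) :=
      (continuous_infDist_pt _).add (continuous_infDist_pt _)
    obtain ⟨v₁, hv₁, hmin⟩ := (isCompact_sphere (0:V) 1).exists_isMinOn hsph hcont.continuousOn
    set c := infDist v₁ (S : Set V) + infDist v₁ (T : Set V) with hc
    have hv₁n : ‖v₁‖ = 1 := by simpa using hv₁
    have hcpos : 0 < c := by
      rcases lt_or_eq_of_le (add_nonneg infDist_nonneg infDist_nonneg : (0:ℝ) ≤ c) with h' | h'
      · exact h'
      · exfalso
        have h1 : infDist v₁ (S : Set V) = 0 ∧ infDist v₁ (T : Set V) = 0 := by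
          constructor <;> nlinarith [infDist_nonneg (x := v₁) (s := (S : Set V)),
            infDist_nonneg (x := v₁) (s := (T : Set V))]
        have hS : v₁ ∈ S :=
          (S.closed_of_finiteDimensional.mem_iff_infDist_zero ⟨0, S.zero_mem⟩).mpr h1.1
        have hT : v₁ ∈ T :=
          (T.closed_of_finiteDimensional.mem_iff_infDist_zero ⟨0, T.zero_mem⟩).mpr h1.2
        have : v₁ ∈ S ⊓ T := ⟨hS, hT⟩
        rw [h] at this
        simp only [Submodule.mem_bot] at this
        rw [this] at hv₁n; simp at hv₁n
    refine ⟨c, hcpos, fun v => ?_⟩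
    rcases eq_or_ne v 0 with rfl | hv
    · simp [infDist_zero_of_mem S.zero_mem, infDist_zero_of_mem T.zero_mem]
    · have hnv : 0 < ‖v‖ := norm_pos_iff.mpr hv
      have hmem : ‖v‖⁻¹ • v ∈ Metric.sphere (0:V) 1 := by
        simp [norm_smul, inv_mul_cancel₀ hnv.ne']
      have h3 := hmin hmem
      simp only [Set.mem_setOf_eq] at h3
      rw [infDist_smul_eq, infDist_smul_eq, abs_inv, abs_of_pos hnv] at h3
      have h2 : c ≤ ‖v‖⁻¹ * (infDist v (S : Set V) + infDist v (T : Set V)) := by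
        rw [mul_add]; exact h3
      calc c * ‖v‖ ≤ (‖v‖⁻¹ * (infDist v (S : Set V) + infDist v (T : Set V))) * ‖v‖ := by
            nlinarith
        _ = infDist v (S : Set V) + infDist v (T : Set V) := by field_simp


/-- pointwise decay on a finite-dimensional subspace is uniform -/
theorem uniform_decay [FiniteDimensional ℝ V] (M : Submodule ℝ V) (T : ℕ → V →ₗ[ℝ] V)
    (h : ∀ m ∈ M, Tendsto (fun n => ‖T n m‖) atTop (nhds 0)) :
    ∀ ε > 0, ∃ N, ∀ n ≥ N, ∀ m ∈ M, ‖T n m‖ ≤ ε * ‖m‖ := by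
  intro ε hε
  set d := Module.finrank ℝ M with hd
  let b : Module.Basis (Fin d) ℝ M := Module.finBasis ℝ M
  -- coordinate bound
  obtain ⟨C, hC0, hC⟩ : ∃ C > 0, ∀ m : M, (∑ j, |b.repr m j|) ≤ C * ‖m‖ := by
    refine ⟨(∑ j, ‖LinearMap.toContinuousLinearMap (b.coord j)‖) + 1, by positivity, fun m => ?_⟩
    have h1 : ∀ j, |b.repr m j| ≤ ‖LinearMap.toContinuousLinearMap (b.coord j)‖ * ‖m‖ := by
      intro j
      have := (LinearMap.toContinuousLinearMap (b.coord j)).le_opNorm m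
      simpa [Real.norm_eq_abs] using this
    calc (∑ j, |b.repr m j|) ≤ ∑ j, ‖LinearMap.toContinuousLinearMap (b.coord j)‖ * ‖m‖ :=
          Finset.sum_le_sum fun j _ => h1 j
      _ = (∑ j, ‖LinearMap.toContinuousLinearMap (b.coord j)‖) * ‖m‖ := by
          rw [Finset.sum_mul]
      _ ≤ ((∑ j, ‖LinearMap.toContinuousLinearMap (b.coord j)‖) + 1) * ‖m‖ := by
          nlinarith [norm_nonneg m]
  have hbasis : ∀ᶠ n in atTop, ∀ j : Fin d, ‖T n ((b j : M) : V)‖ ≤ ε / C := by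
    rw [eventually_all]
    intro j
    have := h ((b j : M) : V) (b j).2
    rw [Metric.tendsto_atTop] at this
    obtain ⟨N, hN⟩ := this (ε / C) (by positivity)
    rw [eventually_atTop]
    refine ⟨N, fun n hn => ?_⟩
    have := hN n hn
    rw [Real.dist_eq, sub_zero, abs_of_nonneg (norm_nonneg _)] at this
    exact this.le
  rw [eventually_atTop] at hbasis
  obtain ⟨N, hN⟩ := hbasis
  refine ⟨N, fun n hn m hm => ?_⟩
  set m' : M := ⟨m, hm⟩ with hm'
  have hrepr : ((∑ j, b.repr m' j • b j : M) : V) = m := by rw [b.sum_repr m']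
  have key : T n m = ∑ j, b.repr m' j • T n ((b j : M) : V) := by
    rw [← hrepr]
    push_cast [Submodule.coe_sum]
    rw [map_sum]
    congr 1
    ext j
    rw [map_smul]
  rw [key]
  calc ‖∑ j, b.repr m' j • T n ((b j : M) : V)‖ ≤ ∑ j, ‖b.repr m' j • T n ((b j : M) : V)‖ :=
        norm_sum_le _ _
    _ = ∑ j, |b.repr m' j| * ‖T n ((b j : M) : V)‖ := by
        simp [norm_smul, Real.norm_eq_abs]
    _ ≤ ∑ j, |b.repr m' j| * (ε / C) :=
        Finset.sum_le_sum fun j _ => by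
          have := hN n hn j
          nlinarith [abs_nonneg (b.repr m' j)]
    _ = (∑ j, |b.repr m' j|) * (ε / C) := by rw [Finset.sum_mul]
    _ ≤ (C * ‖m‖) * (ε / C) := by
        have h2 := hC m'
        have h3 : ‖m'‖ = ‖m‖ := rfl
        rw [h3] at h2
        have : 0 ≤ ε / C := by positivity
        nlinarith
    _ = ε * ‖m‖ := by field_simp


theorem line_inf_bot [FiniteDimensional ℝ V] (L X : Submodule ℝ V)
    (hL : Module.finrank ℝ L = 1) (h : ¬ L ≤ X) : L ⊓ X = ⊥ := by
  by_contra hne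
  obtain ⟨x, hx, hx0⟩ := Submodule.exists_mem_ne_zero_of_ne_bot hne
  have hxL : x ∈ L := hx.1
  have hspan : Submodule.span ℝ {x} = L := by
    apply Submodule.eq_of_le_of_finrank_le
    · rw [Submodule.span_singleton_le_iff_mem]; exact hxL
    · rw [hL, finrank_span_singleton hx0]
  apply h
  rw [← hspan, Submodule.span_singleton_le_iff_mem]
  exact hx.2

theorem line_not_le [FiniteDimensional ℝ V] (L X : Submodule ℝ V)
    (hL : Module.finrank ℝ L = 1) (h : L ⊓ X = ⊥) : ¬ L ≤ X := by
  intro hle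
  have : L = ⊥ := by rw [← h]; exact (inf_eq_left.mpr hle).symm
  rw [this] at hL; simp [finrank_bot] at hL

set_option maxHeartbeats 1000000 in
theorem core_contraction [FiniteDimensional ℝ V] (g : V ≃ₗ[ℝ] V) (L M : Submodule ℝ V)
    (hL1 : Module.finrank ℝ L = 1) (hLM : L ⊓ M = ⊥) (hsup : L ⊔ M = ⊤)
    (hmapL : L.map (g : V →ₗ[ℝ] V) = L) (hmapM : M.map (g : V →ₗ[ℝ] V) = M)
    (hatt : ∀ w : V, w ∉ M →
      Tendsto (fun n : ℕ => infDist (‖(g ^ n) w‖⁻¹ • (g ^ n) w) (L : Set V)) atTop (nhds 0))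
    (δ δ' : ℝ) (hδ : 0 < δ) (hδ' : 0 < δ') :
    ∃ N : ℕ, ∀ n ≥ N, ∀ v : V, δ * ‖v‖ ≤ infDist v (M : Set V) →
      infDist ((g ^ n) v) (L : Set V) ≤ δ' * ‖(g ^ n) v‖ := by
  -- eigenvector
  have hLbot : L ≠ ⊥ := by intro h; rw [h] at hL1; simp [finrank_bot] at hL1
  obtain ⟨u, huL, hu0⟩ := Submodule.exists_mem_ne_zero_of_ne_bot hLbot
  have hspan : Submodule.span ℝ {u} = L := by
    apply Submodule.eq_of_le_of_finrank_le
    · rw [Submodule.span_singleton_le_iff_mem]; exact huL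
    · rw [hL1, finrank_span_singleton hu0]
  have hgu : (g : V →ₗ[ℝ] V) u ∈ L := hmapL ▸ Submodule.mem_map_of_mem huL
  rw [← hspan, Submodule.mem_span_singleton] at hgu
  obtain ⟨a, ha⟩ := hgu
  have hgu' : g u = a • u := ha.symm
  have ha0 : a ≠ 0 := by
    intro h; rw [h, zero_smul] at hgu'
    exact hu0 (by simpa using g.map_eq_zero_iff.mp hgu')
  have hapos : ∀ n : ℕ, (0:ℝ) < |a| ^ n := fun n => pow_pos (abs_pos.mpr ha0) n
  -- powers on the eigenline
  have hpow : ∀ n : ℕ, (g ^ n) u = a ^ n • u := by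
    intro n
    induction n with
    | zero => simp
    | succ n ih =>
      have : (g ^ (n+1)) u = (g ^ n) (g u) := by
        rw [pow_succ]; rfl
      rw [this, hgu', map_smul, ih, smul_smul, ← pow_succ']
  -- M invariant
  have hMinv : ∀ n : ℕ, ∀ m ∈ M, (g ^ n) m ∈ M := by
    intro n
    induction n with
    | zero => intro m hm; simpa using hm
    | succ n ih =>
      intro m hm
      have h1 : (g ^ (n+1)) m = (g ^ n) (g m) := by rw [pow_succ]; rfl
      rw [h1]
      exact ih _ (hmapM ▸ Submodule.mem_map_of_mem hm)
  -- separation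
  obtain ⟨c, hc0, hc⟩ := exists_sep L M hLM
  have hcM : ∀ m ∈ M, c * ‖m‖ ≤ infDist m (L : Set V) := by
    intro m hm
    have := hc m
    rw [infDist_zero_of_mem (by exact hm : m ∈ (M : Set V))] at this
    linarith
  have huM : u ∉ M := by
    intro h
    have h2 : u ∈ L ⊓ M := Submodule.mem_inf.mpr ⟨huL, h⟩
    rw [hLM, Submodule.mem_bot] at h2
    exact hu0 h2
  have hunorm : 0 < ‖u‖ := norm_pos_iff.mpr hu0
  -- pointwise decay on M
  have hpt : ∀ m ∈ M, Tendsto (fun n => ‖(|a| ^ n)⁻¹ • ((g ^ n : V ≃ₗ[ℝ] V) : V →ₗ[ℝ] V) m‖)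
      atTop (nhds 0) := by
    intro m hm
    have hwM : u + m ∉ M := fun h => huM (by simpa using M.sub_mem h hm)
    have hw0 : u + m ≠ 0 := fun h => hwM (h ▸ M.zero_mem)
    have hd := hatt (u + m) hwM
    rw [Metric.tendsto_atTop] at hd ⊢
    intro ε hε
    obtain ⟨N, hN⟩ := hd (c * ε / (‖u‖ + ε)) (by positivity)
    refine ⟨N, fun n hn => ?_⟩
    have hxn0 : (g ^ n) (u + m) ≠ 0 := fun h => hw0 (by simpa using (g ^ n).map_eq_zero_iff.mp h)
    have hxnorm : 0 < ‖(g ^ n) (u + m)‖ := norm_pos_iff.mpr hxn0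
    have hdn := hN n hn
    rw [Real.dist_eq, sub_zero, abs_of_nonneg infDist_nonneg] at hdn
    rw [infDist_smul_eq, abs_inv, abs_of_nonneg (norm_nonneg _)] at hdn
    set E := ‖((g ^ n : V ≃ₗ[ℝ] V) : V →ₗ[ℝ] V) m‖ with hE
    have hEeq : ‖(|a| ^ n)⁻¹ • ((g ^ n : V ≃ₗ[ℝ] V) : V →ₗ[ℝ] V) m‖ = (|a| ^ n)⁻¹ * E := by
      rw [norm_smul, Real.norm_eq_abs, abs_inv, abs_of_pos (hapos n)]
    rw [Real.dist_eq, sub_zero, hEeq, abs_of_nonneg (by positivity)]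
    -- lower bound for infDist
    have hsplit : (g ^ n) (u + m) = (g ^ n) m + a ^ n • u := by
      rw [map_add, hpow n, add_comm]
    have hIL : infDist ((g ^ n) (u + m)) (L : Set V) = infDist ((g ^ n) m) (L : Set V) := by
      rw [hsplit, infDist_add_mem L _ _ (L.smul_mem _ huL)]
    have hgnm : ((g ^ n : V ≃ₗ[ℝ] V) : V →ₗ[ℝ] V) m = (g ^ n) m := rfl
    have hlow : c * E ≤ infDist ((g ^ n) (u + m)) (L : Set V) := by
      rw [hIL, hE, hgnm]
      exact hcM _ (hMinv n m hm)
    have hupper : ‖(g ^ n) (u + m)‖ ≤ |a| ^ n * ‖u‖ + E := by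
      rw [hsplit, hE, hgnm]
      calc ‖(g ^ n) m + a ^ n • u‖ ≤ ‖(g ^ n) m‖ + ‖a ^ n • u‖ := norm_add_le _ _
        _ = ‖(g ^ n) m‖ + |a| ^ n * ‖u‖ := by rw [norm_smul, Real.norm_eq_abs, abs_pow]
        _ = |a| ^ n * ‖u‖ + ‖(g ^ n) m‖ := by ring
    -- hdn : ‖x‖⁻¹ * infDist x L < cε/(‖u‖+ε)
    by_contra hcon
    push_neg at hcon
    -- hcon : ε ≤ (|a|^n)⁻¹ * E, i.e. ε * |a|^n ≤ E
    have hE' : ε * |a| ^ n ≤ E := by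
      have := mul_le_mul_of_nonneg_left hcon (hapos n).le
      rw [mul_inv_cancel_left₀ (hapos n).ne'] at this
      linarith [this]
    have h1 : c * E ≤ (‖(g ^ n) (u + m)‖⁻¹ * infDist ((g ^ n) (u + m)) (L : Set V))
        * ‖(g ^ n) (u + m)‖ := by
      rw [mul_comm _ (infDist _ _), mul_assoc, inv_mul_cancel₀ hxnorm.ne', mul_one]
      exact hlow
    have h2 : c * E < (c * ε / (‖u‖ + ε)) * (|a| ^ n * ‖u‖ + E) := by
      calc c * E ≤ _ := h1
        _ < (c * ε / (‖u‖ + ε)) * ‖(g ^ n) (u + m)‖ := by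
            apply mul_lt_mul_of_pos_right hdn hxnorm
        _ ≤ (c * ε / (‖u‖ + ε)) * (|a| ^ n * ‖u‖ + E) := by
            apply mul_le_mul_of_nonneg_left hupper (by positivity)
    have hden : 0 < ‖u‖ + ε := by positivity
    rw [div_mul_eq_mul_div, lt_div_iff₀ hden] at h2
    -- c E (‖u‖+ε) < c ε (|a|^n ‖u‖ + E)
    nlinarith [mul_le_mul_of_nonneg_left hE' (by positivity : (0:ℝ) ≤ c * ‖u‖), h2]
  -- uniform decay
  set K := (infDist u (M : Set V)) / δ + ‖u‖ with hK
  have hcu : 0 < infDist u (M : Set V) :=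
    (M.closed_of_finiteDimensional.notMem_iff_infDist_pos ⟨0, M.zero_mem⟩).mp huM
  have hKpos : 0 < K := by positivity
  obtain ⟨N, hNdec⟩ := uniform_decay M (fun n => (|a| ^ n)⁻¹ • ((g ^ n : V ≃ₗ[ℝ] V) : V →ₗ[ℝ] V))
    hpt (δ' * ‖u‖ / (K * (1 + δ'))) (by positivity)
  refine ⟨N, fun n hn v hv => ?_⟩
  -- decompose v
  have hvmem : v ∈ L ⊔ M := hsup ▸ Submodule.mem_top
  obtain ⟨p, hp, m, hm, hpm⟩ := Submodule.mem_sup.mp hvmem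
  rw [← hspan, Submodule.mem_span_singleton] at hp
  obtain ⟨b, hb⟩ := hp
  subst hpm
  subst hb
  -- infDist v M = |b| * cu
  have hIvM : infDist (b • u + m) (M : Set V) = |b| * infDist u (M : Set V) := by
    rw [infDist_add_mem M _ _ hm, infDist_smul_eq]
  rw [hIvM] at hv
  -- ‖m‖ ≤ |b| * K
  have hmK : ‖m‖ ≤ |b| * K := by
    have h1 : ‖m‖ ≤ ‖b • u + m‖ + |b| * ‖u‖ := by
      have : m = (b • u + m) - b • u := by abel
      calc ‖m‖ = ‖(b • u + m) - b • u‖ := by rw [← this]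
        _ ≤ ‖b • u + m‖ + ‖b • u‖ := norm_sub_le _ _
        _ = ‖b • u + m‖ + |b| * ‖u‖ := by rw [norm_smul, Real.norm_eq_abs]
    have h2 : δ * ‖b • u + m‖ ≤ |b| * infDist u (M : Set V) := hv
    have h3 : ‖b • u + m‖ ≤ |b| * infDist u (M : Set V) / δ := by
      rw [le_div_iff₀ hδ]; linarith
    calc ‖m‖ ≤ |b| * infDist u (M : Set V) / δ + |b| * ‖u‖ := by linarith
      _ = |b| * K := by rw [hK]; ring
  -- image decomposition
  have hsplit : (g ^ n) (b • u + m) = (g ^ n) m + (b * a ^ n) • u := by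
    rw [map_add, map_smul, hpow n, smul_smul]; abel
  set E := ‖(g ^ n) m‖ with hE
  have hgnm : ((g ^ n : V ≃ₗ[ℝ] V) : V →ₗ[ℝ] V) m = (g ^ n) m := rfl
  have hdec := hNdec n hn m hm
  rw [LinearMap.smul_apply, norm_smul, Real.norm_eq_abs, abs_inv, abs_of_pos (hapos n), hgnm, ← hE] at hdec
  have hEbound : E ≤ (δ' * ‖u‖ / (K * (1 + δ'))) * (|a| ^ n * (|b| * K)) := by
    have h4 : (|a| ^ n)⁻¹ * E ≤ (δ' * ‖u‖ / (K * (1 + δ'))) * ‖m‖ := hdec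
    have h5 : E = |a| ^ n * ((|a| ^ n)⁻¹ * E) := by
      rw [← mul_assoc, mul_inv_cancel₀ (hapos n).ne', one_mul]
    rw [h5]
    calc |a| ^ n * ((|a| ^ n)⁻¹ * E) ≤ |a| ^ n * ((δ' * ‖u‖ / (K * (1 + δ'))) * ‖m‖) :=
          mul_le_mul_of_nonneg_left h4 (hapos n).le
      _ ≤ |a| ^ n * ((δ' * ‖u‖ / (K * (1 + δ'))) * (|b| * K)) := by
          apply mul_le_mul_of_nonneg_left _ (hapos n).le
          apply mul_le_mul_of_nonneg_left hmK (by positivity)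
      _ = (δ' * ‖u‖ / (K * (1 + δ'))) * (|a| ^ n * (|b| * K)) := by ring
  -- infDist ≤ E
  have hIDle : infDist ((g ^ n) (b • u + m)) (L : Set V) ≤ E := by
    calc infDist ((g ^ n) (b • u + m)) (L : Set V) ≤ dist ((g ^ n) (b • u + m)) ((b * a ^ n) • u) :=
          infDist_le_dist_of_mem (L.smul_mem _ huL)
      _ = E := by rw [hsplit, dist_eq_norm]; simp [hE]
  -- lower bound on ‖g^n v‖
  have hnlow : |a| ^ n * (|b| * ‖u‖) - E ≤ ‖(g ^ n) (b • u + m)‖ := by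
    have h6 : ‖(b * a ^ n) • u‖ ≤ ‖(g ^ n) (b • u + m)‖ + E := by
      calc ‖(b * a ^ n) • u‖ = ‖(g ^ n) (b • u + m) - (g ^ n) m‖ := by
            rw [hsplit, add_sub_cancel_left]
        _ ≤ ‖(g ^ n) (b • u + m)‖ + ‖(g ^ n) m‖ := norm_sub_le _ _
    have h7 : ‖(b * a ^ n) • u‖ = |a| ^ n * (|b| * ‖u‖) := by
      rw [norm_smul, Real.norm_eq_abs, abs_mul, abs_pow]; ring
    rw [h7] at h6; linarith [h6]
  -- conclude: E ≤ δ' * ‖g^n v‖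
  have hfinal : E * (1 + δ') ≤ δ' * (|a| ^ n * (|b| * ‖u‖)) := by
    have h8 : (δ' * ‖u‖ / (K * (1 + δ'))) * (|a| ^ n * (|b| * K)) * (1 + δ')
        = δ' * (|a| ^ n * (|b| * ‖u‖)) := by
      field_simp
    nlinarith [hEbound, hδ', hapos n, abs_nonneg b, norm_nonneg ((g ^ n) m)]
  have hEnn : 0 ≤ E := norm_nonneg _
  calc infDist ((g ^ n) (b • u + m)) (L : Set V) ≤ E := hIDle
    _ ≤ δ' * ‖(g ^ n) (b • u + m)‖ := by nlinarith [hnlow, hδ']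

end Helpers

open Metric

set_option maxHeartbeats 2000000

/-- The freeness and discreteness conclusions of Lemma 4.7: biproximal elements with
pairwise distinct attracting/repelling lines in general position have high powers that
freely generate a discrete free subgroup of `GL(V)`. -/
theorem lemma_4_7 {V : Type*} [NormedAddCommGroup V] [NormedSpace ℝ V]
    [FiniteDimensional ℝ V]
    (k : ℕ) (hk : 2 ≤ k) (γ : Fin k → (V ≃ₗ[ℝ] V))
    (Lp Lm W : Fin k → Submodule ℝ V)
    (hbi : ∀ i, IsBiproximal (γ i) (Lp i) (Lm i) (W i))
    (hdist : ∀ (i j : Fin k) (α β : Bool), (i, α) ≠ (j, β) →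
      (if α then Lp i else Lm i) ≠ (if β then Lp j else Lm j))
    (hpos : ∀ i j, i ≠ j → ∀ α β : Bool,
      ¬ (if α then Lp i else Lm i) ≤ (if β then Lp j else Lm j) ⊔ W j) :
    ∃ N₀ : ℕ, ∀ N ≥ N₀,
      Function.Injective (FreeGroup.lift (fun i : Fin k => (γ i) ^ N) :
        FreeGroup (Fin k) →* (V ≃ₗ[ℝ] V)) ∧
      DiscreteTopology
        ((fun g : V ≃ₗ[ℝ] V => LinearMap.toContinuousLinearMap (g : V →ₗ[ℝ] V)) ''
          (Subgroup.closure (Set.range (fun i : Fin k => (γ i) ^ N)) :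
            Set (V ≃ₗ[ℝ] V))) := by
  classical
  haveI : Nonempty (Fin k) := ⟨⟨0, by omega⟩⟩
  set Latt : Fin k × Bool → Submodule ℝ V := fun P => if P.2 then Lp P.1 else Lm P.1 with hLatt
  set Rep : Fin k × Bool → Submodule ℝ V :=
    fun P => (if P.2 then Lm P.1 else Lp P.1) ⊔ W P.1 with hRep
  -- finrank of attracting lines
  have hline : ∀ P : Fin k × Bool, Module.finrank ℝ (Latt P) = 1 := by
    rintro ⟨i, b⟩
    cases b
    · exact (hbi i).finrank_Lm
    · exact (hbi i).finrank_Lp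
  -- lemma D : Latt P ⊓ Rep P = ⊥
  have hD1 : ∀ i, ¬ Lp i ≤ Lm i ⊔ W i := by
    intro i hle
    have h1 : Lp i ≠ ⊥ := by
      intro h
      have := (hbi i).finrank_Lp
      rw [h] at this; simp [finrank_bot] at this
    obtain ⟨u, huL, hu0⟩ := Submodule.exists_mem_ne_zero_of_ne_bot h1
    obtain ⟨m, hm, w, hw, hmw⟩ := Submodule.mem_sup.mp (hle huL)
    have hwmem : w ∈ (Lp i ⊔ Lm i) ⊓ W i := by
      refine ⟨?_, hw⟩
      have h2 : w = u - m := by rw [← hmw]; abel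
      rw [h2]
      exact Submodule.sub_mem _ (Submodule.mem_sup_left huL) (Submodule.mem_sup_right hm)
    rw [(hbi i).inf_W, Submodule.mem_bot] at hwmem
    subst hwmem
    rw [add_zero] at hmw
    subst hmw
    have h3 : m ∈ Lp i ⊓ Lm i := ⟨huL, hm⟩
    rw [(hbi i).inf_lines, Submodule.mem_bot] at h3
    exact hu0 h3
  have hD2 : ∀ i, ¬ Lm i ≤ Lp i ⊔ W i := by
    intro i hle
    have h1 : Lm i ≠ ⊥ := by
      intro h
      have := (hbi i).finrank_Lm
      rw [h] at this; simp [finrank_bot] at this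
    obtain ⟨u, huL, hu0⟩ := Submodule.exists_mem_ne_zero_of_ne_bot h1
    obtain ⟨m, hm, w, hw, hmw⟩ := Submodule.mem_sup.mp (hle huL)
    have hwmem : w ∈ (Lp i ⊔ Lm i) ⊓ W i := by
      refine ⟨?_, hw⟩
      have h2 : w = u - m := by rw [← hmw]; abel
      rw [h2]
      exact Submodule.sub_mem _ (Submodule.mem_sup_right huL) (Submodule.mem_sup_left hm)
    rw [(hbi i).inf_W, Submodule.mem_bot] at hwmem
    subst hwmem
    rw [add_zero] at hmw
    subst hmw
    have h3 : m ∈ Lp i ⊓ Lm i := ⟨hm, huL⟩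
    rw [(hbi i).inf_lines, Submodule.mem_bot] at h3
    exact hu0 h3
  -- trivial intersections for ping-pong
  have hInfBot : ∀ P Q : Fin k × Bool, P ≠ (Q.1, !Q.2) → Latt P ⊓ Rep Q = ⊥ := by
    rintro ⟨j, c⟩ ⟨i, b⟩ hne
    apply line_inf_bot _ _ (hline (j, c))
    rcases eq_or_ne j i with rfl | hji
    · cases c <;> cases b
      · exact hD2 j
      · exact absurd rfl hne
      · exact absurd rfl hne
      · exact hD1 j
    · have := hpos j i hji c (!b)
      cases c <;> cases b <;> exact this
  -- sup with complement is everything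
  have hsupP : ∀ P : Fin k × Bool, Latt P ⊔ Rep P = ⊤ := by
    rintro ⟨i, b⟩
    have h := (hbi i).sup_top
    cases b
    · show Lm i ⊔ (Lp i ⊔ W i) = ⊤
      rw [← sup_assoc, sup_comm (Lm i) (Lp i), sup_assoc] at *
      exact h
    · show Lp i ⊔ (Lm i ⊔ W i) = ⊤
      rw [← sup_assoc]
      exact h
  -- Rep P is proper
  have hPnePflip : ∀ P : Fin k × Bool, P ≠ (P.1, !P.2) := by
    rintro ⟨i, b⟩ h
    have := congrArg Prod.snd h
    simp at this
  have hRepNeTop : ∀ P : Fin k × Bool, Rep P ≠ ⊤ := by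
    intro P h
    have h1 := hInfBot P P (hPnePflip P)
    rw [h, inf_top_eq] at h1
    have := hline P
    rw [h1] at this; simp [finrank_bot] at this
  -- base point avoiding all repelling subspaces
  obtain ⟨x₀, hx₀⟩ : ∃ x₀ : V, ∀ P : Fin k × Bool, x₀ ∉ Rep P := by
    by_contra h
    push_neg at h
    have hcov : ⋃ P : Fin k × Bool, ((Rep P : Set V)) = Set.univ := by
      ext x
      simp only [Set.mem_iUnion, Set.mem_univ, iff_true, SetLike.mem_coe]
      exact h x
    obtain ⟨P, hP⟩ := Subspace.exists_eq_top_of_iUnion_eq_univ hcov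
    exact hRepNeTop P hP
  have hx₀0 : x₀ ≠ 0 := by
    intro h
    exact hx₀ (Classical.arbitrary _, true) (h ▸ Submodule.zero_mem _)
  have hx₀n : 0 < ‖x₀‖ := norm_pos_iff.mpr hx₀0
  -- margin
  set m₀ := Finset.univ.inf' Finset.univ_nonempty
    (fun P : Fin k × Bool => infDist x₀ ((Rep P : Set V))) with hm₀
  have hm₀pos : 0 < m₀ := by
    rw [hm₀, Finset.lt_inf'_iff]
    intro P _
    exact ((Rep P).closed_of_finiteDimensional.notMem_iff_infDist_pos
      ⟨0, (Rep P).zero_mem⟩).mp (hx₀ P)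
  have hm₀le : ∀ P : Fin k × Bool, m₀ ≤ infDist x₀ ((Rep P : Set V)) := by
    intro P
    exact Finset.inf'_le _ (Finset.mem_univ P)
  -- separation constants
  have hcf : ∀ P Q : Fin k × Bool, ∃ c > 0, P ≠ (Q.1, !Q.2) →
      ∀ v : V, c * ‖v‖ ≤ infDist v ((Latt P : Set V)) + infDist v ((Rep Q : Set V)) := by
    intro P Q
    by_cases hPQ : P = (Q.1, !Q.2)
    · exact ⟨1, one_pos, fun h => absurd hPQ h⟩
    · obtain ⟨c, hc0, hc⟩ := exists_sep _ _ (hInfBot P Q hPQ)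
      exact ⟨c, hc0, fun _ => hc⟩
  choose cf hcf0 hcfs using hcf
  set cmin := (Finset.univ : Finset ((Fin k × Bool) × (Fin k × Bool))).inf'
    Finset.univ_nonempty (fun PQ => cf PQ.1 PQ.2) with hcmin
  have hcminpos : 0 < cmin := by
    rw [hcmin, Finset.lt_inf'_iff]
    exact fun PQ _ => hcf0 _ _
  have hcminle : ∀ P Q, cmin ≤ cf P Q := fun P Q =>
    Finset.inf'_le _ (Finset.mem_univ (P, Q))
  -- the cone aperture
  set δ := min (cmin / 3) (m₀ / (2 * (‖x₀‖ + 1))) with hδdef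
  have hδpos : 0 < δ := by
    rw [hδdef]
    apply lt_min (by positivity) (by positivity)
  have hδx₀ : δ * ‖x₀‖ ≤ m₀ / 2 := by
    have h1 : δ ≤ m₀ / (2 * (‖x₀‖ + 1)) := min_le_right _ _
    have h2 : δ * ‖x₀‖ ≤ (m₀ / (2 * (‖x₀‖ + 1))) * ‖x₀‖ :=
      mul_le_mul_of_nonneg_right h1 (norm_nonneg _)
    have h3 : (m₀ / (2 * (‖x₀‖ + 1))) * ‖x₀‖ ≤ m₀ / 2 := by
      rw [div_mul_eq_mul_div, div_le_div_iff₀ (by positivity) (by positivity)]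
      nlinarith [hm₀pos, hx₀n]
    linarith
  have hδcmin : 3 * δ ≤ cmin := by
    have := min_le_left (cmin / 3) (m₀ / (2 * (‖x₀‖ + 1)))
    rw [← hδdef] at this
    linarith
  -- x₀ is outside every repelling cone, with margin
  have hx₀rep : ∀ P : Fin k × Bool, δ * ‖x₀‖ ≤ infDist x₀ ((Rep P : Set V)) := by
    intro P
    have := hm₀le P
    linarith [hδx₀, hm₀pos]
  -- separation: a vector in an attracting cone is out of the other repelling cones
  have hsep : ∀ Q P : Fin k × Bool, Q ≠ (P.1, !P.2) → ∀ v : V,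
      infDist v ((Latt Q : Set V)) ≤ δ * ‖v‖ → δ * ‖v‖ ≤ infDist v ((Rep P : Set V)) := by
    intro Q P hQP v hv
    have h1 := hcfs Q P hQP v
    have h2 : cmin * ‖v‖ ≤ cf Q P * ‖v‖ :=
      mul_le_mul_of_nonneg_right (hcminle Q P) (norm_nonneg _)
    have h3 : 0 ≤ ‖v‖ := norm_nonneg v
    nlinarith [hδcmin]
  -- invariance of submodules under inverses
  have map_inv : ∀ (g : V ≃ₗ[ℝ] V) (p : Submodule ℝ V), p.map (g : V →ₗ[ℝ] V) = p →
      p.map ((g⁻¹ : V ≃ₗ[ℝ] V) : V →ₗ[ℝ] V) = p := by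
    intro g p h
    conv_lhs => rw [← h]
    rw [← Submodule.map_comp]
    convert Submodule.map_id p using 2
    ext v
    exact g.symm_apply_apply v
  -- the contraction estimates from biproximality
  have hcore : ∀ P : Fin k × Bool, ∃ Np : ℕ, ∀ n ≥ Np, ∀ v : V,
      δ * ‖v‖ ≤ infDist v ((Rep P : Set V)) →
      infDist (((cond P.2 (γ P.1) (γ P.1)⁻¹) ^ n) v) ((Latt P : Set V)) ≤
        δ * ‖((cond P.2 (γ P.1) (γ P.1)⁻¹) ^ n) v‖ := by
    rintro ⟨i, b⟩
    cases b
    · -- repelling direction : g = (γ i)⁻¹, L = Lm i, M = Lp i ⊔ W i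
      refine core_contraction (γ i)⁻¹ (Lm i) (Lp i ⊔ W i) (hbi i).finrank_Lm
        (hInfBot (i, false) (i, false) (hPnePflip _)) (hsupP (i, false)) ?_ ?_
        (hbi i).repel δ δ hδpos hδpos
      · exact map_inv _ _ (hbi i).map_Lm
      · rw [Submodule.map_sup]
        rw [map_inv _ _ (hbi i).map_Lp, map_inv _ _ (hbi i).map_W]
    · -- attracting direction
      exact core_contraction (γ i) (Lp i) (Lm i ⊔ W i) (hbi i).finrank_Lp
        (hInfBot (i, true) (i, true) (hPnePflip _)) (hsupP (i, true))
        (hbi i).map_Lp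
        (by rw [Submodule.map_sup, (hbi i).map_Lm, (hbi i).map_W])
        (hbi i).attract δ δ hδpos hδpos
  choose Nc hNc using hcore
  refine ⟨Finset.univ.sup Nc, fun N hN => ?_⟩
  set f : Fin k → (V ≃ₗ[ℝ] V) := fun i => γ i ^ N with hf
  set letter : Fin k × Bool → (V ≃ₗ[ℝ] V) := fun x => cond x.2 (f x.1) (f x.1)⁻¹ with hletter
  -- the contraction property of the chosen powers
  have hcontr : ∀ P : Fin k × Bool, ∀ v : V, δ * ‖v‖ ≤ infDist v ((Rep P : Set V)) →
      infDist ((letter P) v) ((Latt P : Set V)) ≤ δ * ‖(letter P) v‖ := by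
    rintro ⟨i, b⟩ v hv
    have hNP : Nc (i, b) ≤ N := le_trans (Finset.le_sup (Finset.mem_univ (i, b))) hN
    cases b
    · have h := hNc (i, false) N hNP v hv
      simp only [cond_false] at h
      rw [inv_pow] at h
      exact h
    · exact hNc (i, true) N hNP v hv
  -- ping-pong induction on reduced words
  have hping : ∀ L : List (Fin k × Bool),
      (∀ l1 x b l2, L ≠ l1 ++ (x, b) :: (x, !b) :: l2) →
      ∀ hd tl, L = hd :: tl →
      infDist (((L.map letter).prod) x₀) ((Latt hd : Set V)) ≤ δ * ‖((L.map letter).prod) x₀‖ := by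
    intro L
    induction L with
    | nil => intro _ hd tl h; cases h
    | cons a tl ih =>
      intro hred hd tl' heq
      obtain ⟨rfl, rfl⟩ : a = hd ∧ tl = tl' := by
        refine ⟨?_, ?_⟩ <;> injection heq
      cases tl with
      | nil =>
        rw [List.map_cons, List.map_nil, List.prod_cons, List.prod_nil]
        exact hcontr a x₀ (hx₀rep a)
      | cons b2 tl2 =>
        have hredtl : ∀ l1 x b l2, (b2 :: tl2 : List (Fin k × Bool)) ≠ l1 ++ (x, b) :: (x, !b) :: l2 := by
          intro l1 x b l2 h
          exact hred (a :: l1) x b l2 (by rw [List.cons_append, h])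
        have hy := ih hredtl b2 tl2 rfl
        set y := ((List.map letter (b2 :: tl2)).prod) x₀ with hy_def
        have hbne : b2 ≠ (a.1, !a.2) := by
          intro h
          exact hred [] a.1 a.2 tl2 (by rw [h]; simp)
        have h1 := hsep b2 a hbne y hy
        have h2 := hcontr a y h1
        rw [List.map_cons, List.prod_cons]
        exact h2
  -- translate to the free group
  have hΦ : ∀ z : FreeGroup (Fin k), (FreeGroup.lift f) z = ((z.toWord).map letter).prod := by
    intro z
    conv_lhs => rw [← FreeGroup.mk_toWord (x := z)]
    rw [FreeGroup.lift_mk]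
  have hredz : ∀ z : FreeGroup (Fin k), ∀ l1 x b l2,
      z.toWord ≠ l1 ++ (x, b) :: (x, !b) :: l2 := by
    intro z l1 x b l2 h
    exact FreeGroup.reduce.not (L₁ := z.toWord) (by rw [FreeGroup.reduce_toWord]; exact h)
  have hmove : ∀ z : FreeGroup (Fin k), z ≠ 1 → ∃ P : Fin k × Bool,
      infDist (((FreeGroup.lift f) z) x₀) ((Latt P : Set V)) ≤
        δ * ‖((FreeGroup.lift f) z) x₀‖ := by
    intro z hz
    have hnil : z.toWord ≠ [] := fun h => hz (FreeGroup.toWord_eq_nil_iff.mp h)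
    obtain ⟨hd, tl, heq⟩ := List.exists_cons_of_ne_nil hnil
    refine ⟨hd, ?_⟩
    rw [hΦ z, heq]
    exact hping (hd :: tl) (heq ▸ hredz z) hd tl rfl
  -- any nontrivial element moves x₀ definitely
  have hlow : ∀ z : FreeGroup (Fin k), z ≠ 1 →
      m₀ / 2 ≤ (1 + δ) * ‖((FreeGroup.lift f) z) x₀ - x₀‖ := by
    intro z hz
    obtain ⟨P, hPA⟩ := hmove z hz
    set y := ((FreeGroup.lift f) z) x₀ with hy_def
    have hLattRep : (Latt P : Set V) ⊆ (Rep (P.1, !P.2) : Set V) := by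
      obtain ⟨i, b⟩ := P
      cases b
      · exact fun v hv => Submodule.mem_sup_left hv
      · exact fun v hv => Submodule.mem_sup_left hv
    have h1 : m₀ ≤ infDist x₀ ((Latt P : Set V)) :=
      le_trans (hm₀le (P.1, !P.2)) (infDist_le_infDist_of_subset hLattRep ⟨0, Submodule.zero_mem _⟩)
    have h2 : infDist x₀ ((Latt P : Set V)) ≤ infDist y ((Latt P : Set V)) + dist x₀ y :=
      infDist_le_infDist_add_dist
    have h3 : dist x₀ y = ‖y - x₀‖ := by rw [dist_eq_norm, norm_sub_rev]
    have h4 : ‖y‖ ≤ ‖x₀‖ + ‖y - x₀‖ := by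
      calc ‖y‖ = ‖x₀ + (y - x₀)‖ := by congr 1; abel
        _ ≤ ‖x₀‖ + ‖y - x₀‖ := norm_add_le _ _
    nlinarith [hδpos, hδx₀, norm_nonneg (y - x₀)]
  constructor
  · -- freeness
    rw [injective_iff_map_eq_one]
    intro z hz1
    by_contra hz
    have h := hlow z hz
    rw [hz1] at h
    simp only [LinearEquiv.coe_one, id_eq, sub_self, norm_zero, mul_zero] at h
    linarith [hm₀pos]
  · -- discreteness
    rw [← FreeGroup.range_lift_eq_closure]
    refine discreteTopology_iff_isOpen_singleton.mpr ?_
    rintro ⟨x, hx⟩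
    obtain ⟨gz, hgz, rfl⟩ := hx
    obtain ⟨z, rfl⟩ := hgz
    rw [Metric.isOpen_singleton_iff]
    set Ψ : FreeGroup (Fin k) → (V →L[ℝ] V) := fun w =>
      LinearMap.toContinuousLinearMap (((FreeGroup.lift f) w : V ≃ₗ[ℝ] V) : V →ₗ[ℝ] V) with hΨ
    have hΨmul : ∀ w₁ w₂ : FreeGroup (Fin k), Ψ (w₁ * w₂) = (Ψ w₁).comp (Ψ w₂) := by
      intro w₁ w₂
      ext v
      show ((FreeGroup.lift f) (w₁ * w₂)) v = ((FreeGroup.lift f) w₁) (((FreeGroup.lift f) w₂) v)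
      rw [map_mul]
      rfl
    have hΨ1 : Ψ 1 = 1 := by
      ext v
      show ((FreeGroup.lift f) 1) v = v
      rw [map_one]
      rfl
    set d₂ : ℝ := m₀ / 2 / ((1 + δ) * ‖x₀‖) with hd₂
    have hd₂pos : 0 < d₂ := by
      rw [hd₂]
      apply div_pos (by linarith [hm₀pos]) (by positivity)
    have hkey : ∀ w : FreeGroup (Fin k), w ≠ 1 → d₂ ≤ ‖Ψ w - 1‖ := by
      intro w hw
      have h1 := hlow w hw
      have h2 : (Ψ w - 1) x₀ = ((FreeGroup.lift f) w) x₀ - x₀ := by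
        simp [hΨ]
      have h3 : ‖(Ψ w - 1) x₀‖ ≤ ‖Ψ w - 1‖ * ‖x₀‖ := (Ψ w - 1).le_opNorm x₀
      rw [h2] at h3
      rw [hd₂, div_le_iff₀ (by positivity)]
      nlinarith [hδpos]
    refine ⟨d₂ / (‖Ψ z⁻¹‖ + 1), by positivity, ?_⟩
    rintro ⟨y, hy⟩ hdist
    obtain ⟨gy, hgy, rfl⟩ := hy
    obtain ⟨z₁, rfl⟩ := hgy
    have hdist' : ‖Ψ z₁ - Ψ z‖ < d₂ / (‖Ψ z⁻¹‖ + 1) := by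
      rw [Subtype.dist_eq, dist_eq_norm] at hdist
      exact hdist
    have hfact : Ψ (z⁻¹ * z₁) - 1 = (Ψ z⁻¹).comp (Ψ z₁ - Ψ z) := by
      rw [ContinuousLinearMap.comp_sub, ← hΨmul, ← hΨmul, inv_mul_cancel, hΨ1]
    have hz1z : z⁻¹ * z₁ = 1 := by
      by_contra hne
      have h1 := hkey _ hne
      have h2 : ‖Ψ (z⁻¹ * z₁) - 1‖ ≤ ‖Ψ z⁻¹‖ * ‖Ψ z₁ - Ψ z‖ := by
        rw [hfact]
        exact (Ψ z⁻¹).opNorm_comp_le _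
      have h3 : ‖Ψ z⁻¹‖ * ‖Ψ z₁ - Ψ z‖ < d₂ := by
        have h4 : 0 ≤ ‖Ψ z⁻¹‖ := norm_nonneg _
        have h5 : ‖Ψ z⁻¹‖ * ‖Ψ z₁ - Ψ z‖ ≤ (‖Ψ z⁻¹‖ + 1) * ‖Ψ z₁ - Ψ z‖ := by
          nlinarith [norm_nonneg (Ψ z₁ - Ψ z)]
        have h6 : (‖Ψ z⁻¹‖ + 1) * ‖Ψ z₁ - Ψ z‖ < d₂ := by
          rw [lt_div_iff₀ (by positivity)] at hdist'
          nlinarith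
        linarith
      linarith
    have hzz : z₁ = z := by
      have := congrArg (z * ·) hz1z
      simpa [mul_assoc] using this
    subst hzz
    rfl
end
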